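/- arXiv:1009.5489 — 9 statements merged into one kernel-verified Lean document; each statement's English description precedes it below -/
import Mathlib

section
/- For every integer k ≥ 0 and every real μ ≥ k+2, there exists a unique real λ > 0 satisfying λ·f_k(λ) = μ·f_{k+1}(λ), where f_k(λ) = Σ_{i≥k} e^{-λ} λ^i / i!. Moreover, this λ satisfies λ ≤ μ. -/
/-- The upper tail of a Poisson(x) distribution: `f_k(x) = ∑_{i ≥ k} e^{-x} x^i / i!`. -/
noncomputable def fpois (k : ℕ) (x : ℝ) : ℝ :=
  ∑' i : ℕ, if k ≤ i then Real.exp (-x) * x ^ i / (Nat.factorial i) else 0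

namespace Stmt0Aux

open Real Finset

/-- `T k x = ∑_{j≥0} x^j/(j+k)!`. -/
noncomputable def T (k : ℕ) (x : ℝ) : ℝ := ∑' j : ℕ, x ^ j / Nat.factorial (j + k)

lemma summableT (k : ℕ) (x : ℝ) : Summable (fun j : ℕ => x ^ j / Nat.factorial (j + k)) := by
  apply Summable.of_norm
  apply Summable.of_nonneg_of_le (fun j => norm_nonneg _) _ (Real.summable_pow_div_factorial |x|)
  intro j
  rw [norm_div, norm_pow, Real.norm_eq_abs, Real.norm_natCast]
  have h1 : (Nat.factorial j : ℝ) ≤ (Nat.factorial (j + k) : ℝ) := by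
    exact_mod_cast Nat.factorial_le (Nat.le_add_right j k)
  exact div_le_div_of_nonneg_left (by positivity) (by positivity) h1

lemma fpois_eq (k : ℕ) (x : ℝ) : fpois k x = Real.exp (-x) * (x ^ k * T k x) := by
  have hinj : Function.Injective (fun j : ℕ => j + k) := fun a b h => by simpa using h
  have h0 : (Function.support fun i : ℕ =>
      if k ≤ i then Real.exp (-x) * x ^ i / (Nat.factorial i) else 0) ⊆
      Set.range (fun j : ℕ => j + k) := by
    intro i hi
    rw [Function.mem_support] at hi
    have hki : k ≤ i := by by_contra hc; simp [hc] at hi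
    exact ⟨i - k, by simpa using Nat.sub_add_cancel hki⟩
  have := hinj.tsum_eq (f := fun i : ℕ =>
    if k ≤ i then Real.exp (-x) * x ^ i / (Nat.factorial i) else 0) h0
  rw [fpois, ← this]
  simp only [Nat.le_add_left, if_pos]
  rw [T, ← tsum_mul_left, ← tsum_mul_left]
  congr 1 with j
  rw [pow_add]
  ring

lemma T_pos (k : ℕ) {x : ℝ} (hx : 0 ≤ x) : 0 < T k x := by
  have h1 : (x : ℝ) ^ 0 / Nat.factorial (0 + k) ≤ T k x :=
    Summable.le_tsum (summableT k x) 0 (fun j _ => by positivity)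
  have : (0 : ℝ) < x ^ 0 / Nat.factorial (0 + k) := by positivity
  linarith

lemma T_succ (k : ℕ) (x : ℝ) : T k x = 1 / Nat.factorial k + x * T (k + 1) x := by
  rw [T, Summable.tsum_eq_zero_add (summableT k x)]
  congr 1
  · simp
  · rw [T, ← tsum_mul_left]
    congr 1 with j
    rw [pow_succ']
    have : j + 1 + k = j + (k + 1) := by omega
    rw [this]
    ring

/-- The equation `l f_k(l) = μ f_{k+1}(l)` is equivalent to `μ = φ(l)`. -/
lemma equation_iff (k : ℕ) {l μ : ℝ} (hl : 0 < l) :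
    l * fpois k l = μ * fpois (k + 1) l ↔
      μ = l + 1 / (Nat.factorial k * T (k + 1) l) := by
  have hA : 0 < T (k + 1) l := T_pos (k + 1) hl.le
  have he : Real.exp (-l) ≠ 0 := Real.exp_ne_zero _
  have hlk : l ^ (k + 1) ≠ 0 := pow_ne_zero _ hl.ne'
  have hkf : (0 : ℝ) < Nat.factorial k := by positivity
  rw [fpois_eq, fpois_eq, T_succ k l, pow_succ]
  have hF : (Nat.factorial k : ℝ) ≠ 0 := by positivity
  have hne : Real.exp (-l) * l ^ k * l ≠ 0 := by positivity
  set A := T (k + 1) l with hAdef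
  constructor
  · intro h
    have h2 : 1 / (Nat.factorial k : ℝ) + l * A = μ * A := by
      apply mul_left_cancel₀ hne
      linear_combination h
    have h3 : μ = (1 / (Nat.factorial k : ℝ) + l * A) / A := by
      rw [eq_div_iff hA.ne']
      linarith [h2]
    rw [h3]
    field_simp
    ring
  · intro h
    have h2 : 1 / (Nat.factorial k : ℝ) + l * A = μ * A := by
      rw [h]
      field_simp
      ring
    linear_combination (Real.exp (-l) * l ^ k * l) * h2


lemma fact_ineq (k j : ℕ) : ∀ i : ℕ, Nat.factorial (i + k + 1) * Nat.factorial (j + k + 1) ≤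
    Nat.factorial k * Nat.factorial (i + j + k + 2) := by
  intro i
  induction i with
  | zero =>
    have e1 : 0 + k + 1 = k + 1 := by omega
    have e2 : 0 + j + k + 2 = (j + k + 1) + 1 := by omega
    rw [e1, e2, Nat.factorial_succ, Nat.factorial_succ]
    calc (k + 1) * k.factorial * (j + k + 1).factorial
        ≤ (j + k + 1 + 1) * k.factorial * (j + k + 1).factorial := by
          exact Nat.mul_le_mul_right _ (Nat.mul_le_mul_right _ (by omega))
      _ = k.factorial * ((j + k + 1 + 1) * (j + k + 1).factorial) := by ring
  | succ i ih =>
    have e1 : i + 1 + k + 1 = (i + k + 1) + 1 := by omega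
    have e2 : i + 1 + j + k + 2 = (i + j + k + 2) + 1 := by omega
    rw [e1, e2, Nat.factorial_succ, Nat.factorial_succ]
    calc (i + k + 1 + 1) * (i + k + 1).factorial * (j + k + 1).factorial
        = (i + k + 1 + 1) * ((i + k + 1).factorial * (j + k + 1).factorial) := by ring
      _ ≤ (i + j + k + 2 + 1) * (k.factorial * (i + j + k + 2).factorial) := by
          exact Nat.mul_le_mul (by omega) ih
      _ = k.factorial * ((i + j + k + 2 + 1) * (i + j + k + 2).factorial) := by ring

lemma coeff_le (k i m : ℕ) (him : i ≤ m) :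
    (1 : ℝ) / Nat.factorial (m + k + 2) ≤
      Nat.factorial k / (Nat.factorial (i + k + 1) * Nat.factorial (m - i + k + 1)) := by
  have h := fact_ineq k (m - i) i
  have h2 : i + (m - i) + k + 2 = m + k + 2 := by omega
  rw [h2] at h
  have hR : (Nat.factorial (i + k + 1) * Nat.factorial (m - i + k + 1) : ℝ) ≤
      Nat.factorial k * Nat.factorial (m + k + 2) := by exact_mod_cast h
  rw [div_le_div_iff₀ (by positivity) (by positivity)]
  calc (1 : ℝ) * (Nat.factorial (i + k + 1) * Nat.factorial (m - i + k + 1)) =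
      (Nat.factorial (i + k + 1) * Nat.factorial (m - i + k + 1) : ℝ) := by ring
    _ ≤ Nat.factorial k * Nat.factorial (m + k + 2) := hR
    _ = (Nat.factorial k : ℝ) * Nat.factorial (m + k + 2) := by ring

lemma summable_norm_T (k : ℕ) {x : ℝ} (hx : 0 ≤ x) :
    Summable (fun j : ℕ => ‖x ^ j / Nat.factorial (j + k)‖) := by
  refine (summableT k x).congr fun j => ?_
  rw [Real.norm_of_nonneg (by positivity)]

/-- The key strict inequality giving strict monotonicity of `φ`. -/
lemma key (k : ℕ) {a b : ℝ} (ha : 0 ≤ a) (hab : a < b) :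
    T (k + 1) b - T (k + 1) a < (b - a) * (Nat.factorial k * (T (k + 1) b * T (k + 1) a)) := by
  have hb : (0 : ℝ) ≤ b := le_trans ha hab.le
  set F : ℕ → ℝ := fun m => (∑ i ∈ range (m + 1), b ^ i * a ^ (m - i)) /
      Nat.factorial (m + k + 2) with hF
  set G : ℕ → ℝ := fun m => (Nat.factorial k : ℝ) * ∑ i ∈ range (m + 1),
      (b ^ i / Nat.factorial (i + (k + 1))) * (a ^ (m - i) / Nat.factorial (m - i + (k + 1)))
      with hG
  have hprod : T (k + 1) b * T (k + 1) a = ∑' n, ∑ i ∈ range (n + 1),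
      (b ^ i / Nat.factorial (i + (k + 1))) * (a ^ (n - i) / Nat.factorial (n - i + (k + 1))) :=
    tsum_mul_tsum_eq_tsum_sum_range_of_summable_norm (summable_norm_T (k+1) hb)
      (summable_norm_T (k+1) ha)
  have hCsum : Summable (fun n => ∑ i ∈ range (n + 1),
      (b ^ i / Nat.factorial (i + (k + 1))) * (a ^ (n - i) / Nat.factorial (n - i + (k + 1)))) :=
    (summable_norm_sum_mul_range_of_summable_norm (summable_norm_T (k+1) hb)
      (summable_norm_T (k+1) ha)).of_norm
  have hGsum : Summable G := hCsum.mul_left _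
  have hFG : ∀ m, F m ≤ G m := by
    intro m
    simp only [hF, hG]
    rw [Finset.sum_div, Finset.mul_sum]
    refine Finset.sum_le_sum fun i hi => ?_
    have him : i ≤ m := by
      have := Finset.mem_range.mp hi; omega
    have hc := coeff_le k i m him
    have e1 : i + (k + 1) = i + k + 1 := by omega
    have e2 : m - i + (k + 1) = m - i + k + 1 := by omega
    rw [e1, e2]
    calc b ^ i * a ^ (m - i) / Nat.factorial (m + k + 2)
        = (b ^ i * a ^ (m - i)) * (1 / Nat.factorial (m + k + 2)) := by ring
      _ ≤ (b ^ i * a ^ (m - i)) * (Nat.factorial k /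
            (Nat.factorial (i + k + 1) * Nat.factorial (m - i + k + 1))) := by
          exact mul_le_mul_of_nonneg_left hc (by positivity)
      _ = (Nat.factorial k : ℝ) *
            (b ^ i / Nat.factorial (i + k + 1) * (a ^ (m - i) / Nat.factorial (m - i + k + 1))) := by
          ring
  have hFnonneg : ∀ m, 0 ≤ F m := by
    intro m
    simp only [hF]
    have : (0:ℝ) ≤ ∑ i ∈ range (m + 1), b ^ i * a ^ (m - i) :=
      Finset.sum_nonneg fun i _ => by positivity
    positivity
  have hFsum : Summable F := Summable.of_nonneg_of_le hFnonneg hFG hGsum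
  have hF0 : F 0 < G 0 := by
    have h1 : ((Nat.factorial (k + 2) : ℝ)) = (k + 2) * Nat.factorial (k + 1) := by
      exact_mod_cast Nat.factorial_succ (k + 1)
    have h2 : ((Nat.factorial (k + 1) : ℝ)) = (k + 1) * Nat.factorial k := by
      exact_mod_cast Nat.factorial_succ k
    have hk1 : (0:ℝ) < Nat.factorial (k + 1) := by positivity
    have hk0 : (0:ℝ) < Nat.factorial k := by positivity
    have hkey : (1:ℝ) / Nat.factorial (k + 2) <
        Nat.factorial k / (Nat.factorial (k + 1) * Nat.factorial (k + 1)) := by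
      rw [div_lt_div_iff₀ (by positivity) (by positivity), h1, h2]
      nlinarith [mul_pos hk0 hk1]
    have e1 : F 0 = 1 / ((Nat.factorial (k + 2) : ℝ)) := by
      simp [hF, Finset.sum_range_one]
    have e2 : G 0 = (Nat.factorial k : ℝ) / (Nat.factorial (k + 1) * Nat.factorial (k + 1)) := by
      simp [hG, Finset.sum_range_one]
      field_simp
    rw [e1, e2]
    exact hkey
  have hFGlt : ∑' m, F m < ∑' m, G m := Summable.tsum_lt_tsum hFG hF0 hFsum hGsum
  -- Now express T b - T a
  have hD : Summable (fun n : ℕ => (b ^ n - a ^ n) / Nat.factorial (n + (k + 1))) := by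
    refine ((summableT (k+1) b).sub (summableT (k+1) a)).congr fun n => ?_
    rw [sub_div]
  have hTsub : T (k + 1) b - T (k + 1) a
      = ∑' n, (b ^ n - a ^ n) / Nat.factorial (n + (k + 1)) := by
    rw [T, T, ← Summable.tsum_sub (summableT (k+1) b) (summableT (k+1) a)]
    exact tsum_congr fun n => (sub_div _ _ _).symm
  have hshift : ∑' n, (b ^ n - a ^ n) / (Nat.factorial (n + (k + 1)) : ℝ)
      = ∑' m, (b - a) * F m := by
    rw [Summable.tsum_eq_zero_add hD]
    simp only [pow_zero, sub_self, zero_div, zero_add]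
    refine tsum_congr fun m => ?_
    have hgeom := geom_sum₂_mul b a (m + 1)
    have e4 : ∑ i ∈ range (m + 1), b ^ i * a ^ (m + 1 - 1 - i)
        = ∑ i ∈ range (m + 1), b ^ i * a ^ (m - i) :=
      Finset.sum_congr rfl fun i _ => by simp
    rw [e4] at hgeom
    have e3 : m + 1 + (k + 1) = m + k + 2 := by omega
    rw [e3, ← hgeom]
    simp only [hF]
    ring
  have hTG : ∑' m, G m = (Nat.factorial k : ℝ) * (T (k + 1) b * T (k + 1) a) := by
    simp only [hG]
    rw [tsum_mul_left, hprod]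
  calc T (k + 1) b - T (k + 1) a
      = ∑' n, (b ^ n - a ^ n) / (Nat.factorial (n + (k + 1)) : ℝ) := hTsub
    _ = ∑' m, (b - a) * F m := hshift
    _ = (b - a) * ∑' m, F m := tsum_mul_left
    _ < (b - a) * ∑' m, G m := mul_lt_mul_of_pos_left hFGlt (by linarith)
    _ = (b - a) * ((Nat.factorial k : ℝ) * (T (k + 1) b * T (k + 1) a)) := by rw [hTG]

lemma phi_lt (k : ℕ) {a b : ℝ} (ha : 0 < a) (hab : a < b) :
    a + 1 / (Nat.factorial k * T (k + 1) a) < b + 1 / (Nat.factorial k * T (k + 1) b) := by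
  have hTa := T_pos (k + 1) ha.le
  have hTb := T_pos (k + 1) (lt_trans ha hab).le
  have hkey := key k ha.le hab
  have hF : (0:ℝ) < Nat.factorial k := by positivity
  have h1 : 1 / (Nat.factorial k * T (k + 1) a) - 1 / (Nat.factorial k * T (k + 1) b)
      = (T (k + 1) b - T (k + 1) a) / (Nat.factorial k * (T (k + 1) b * T (k + 1) a)) := by
    field_simp
  have h2 : (T (k + 1) b - T (k + 1) a) / (Nat.factorial k * (T (k + 1) b * T (k + 1) a))
      < b - a := by
    rw [div_lt_iff₀ (by positivity)]
    linarith [hkey]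
  linarith [h1, h2]

lemma exp_eq_tsum (x : ℝ) : Real.exp x = ∑' i : ℕ, x ^ i / Nat.factorial i := by
  rw [Real.exp_eq_exp_ℝ, NormedSpace.exp_eq_tsum_div]

lemma T_formula (k : ℕ) {x : ℝ} (hx : 0 < x) :
    T (k + 1) x = (Real.exp x - ∑ i ∈ range (k + 1), x ^ i / Nat.factorial i) / x ^ (k + 1) := by
  have hsum : Summable (fun i : ℕ => x ^ i / (Nat.factorial i : ℝ)) :=
    Real.summable_pow_div_factorial x
  have h := Summable.sum_add_tsum_nat_add (f := fun i : ℕ => x ^ i / (Nat.factorial i : ℝ)) (k + 1) hsum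
  have h2 : ∑' j : ℕ, x ^ (j + (k + 1)) / (Nat.factorial (j + (k + 1)) : ℝ)
      = x ^ (k + 1) * T (k + 1) x := by
    rw [T, ← tsum_mul_left]
    refine tsum_congr fun j => ?_
    rw [pow_add]
    ring
  rw [eq_div_iff (pow_ne_zero _ hx.ne'), exp_eq_tsum]
  rw [h2] at h
  linarith [h]

lemma expP_pos (k : ℕ) {x : ℝ} (hx : 0 < x) :
    0 < Real.exp x - ∑ i ∈ range (k + 1), x ^ i / Nat.factorial i := by
  have hT := T_pos (k + 1) hx.le
  rw [T_formula k hx] at hT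
  rcases div_pos_iff.mp hT with ⟨h, _⟩ | ⟨_, h⟩
  · exact h
  · exact absurd (pow_pos hx (k + 1)) (by linarith)

lemma exists_root (k : ℕ) (μ : ℝ) (hμ : (k : ℝ) + 2 ≤ μ) :
    ∃ l : ℝ, 0 < l ∧ l ≤ μ ∧ μ = l + 1 / (Nat.factorial k * T (k + 1) l) := by
  have hk0 : (0:ℝ) ≤ k := Nat.cast_nonneg k
  have h1μ : (1:ℝ) ≤ μ := by linarith
  set g : ℝ → ℝ := fun x => x + x ^ (k + 1) /
      (Nat.factorial k * (Real.exp x - ∑ i ∈ range (k + 1), x ^ i / Nat.factorial i)) with hg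
  have hgφ : ∀ x : ℝ, 0 < x → g x = x + 1 / (Nat.factorial k * T (k + 1) x) := by
    intro x hx
    have hP := expP_pos k hx
    have hPne : (Real.exp x - ∑ i ∈ range (k + 1), x ^ i / Nat.factorial i) ≠ 0 := hP.ne'
    have hxk : (x : ℝ) ^ (k + 1) ≠ 0 := pow_ne_zero _ hx.ne'
    have hkf : (Nat.factorial k : ℝ) ≠ 0 := by positivity
    rw [hg]
    simp only
    rw [T_formula k hx]
    congr 1
    rw [div_eq_div_iff (by positivity) (by positivity)]
    field_simp
  have hgcont : ContinuousOn g (Set.Icc 1 μ) := by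
    apply ContinuousOn.add continuousOn_id
    apply ContinuousOn.div ((continuous_pow _).continuousOn)
    · apply Continuous.continuousOn
      apply Continuous.mul continuous_const
      apply Continuous.sub Real.continuous_exp
      apply continuous_finset_sum
      intro i _
      exact (continuous_pow i).div_const _
    · intro x hx
      have hx0 : (0:ℝ) < x := lt_of_lt_of_le one_pos hx.1
      have := expP_pos k hx0
      positivity
  have hT1 : (1:ℝ) / Nat.factorial (k + 1) ≤ T (k + 1) 1 := by
    have h := Summable.le_tsum (summableT (k + 1) 1) 0 (fun j _ => by positivity)
    rw [T]
    simpa using h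
  have hg1 : g 1 ≤ μ := by
    rw [hgφ 1 one_pos]
    have hT1pos : (0:ℝ) < T (k + 1) 1 := T_pos (k + 1) (by norm_num)
    have hfact : (Nat.factorial k : ℝ) * (1 / Nat.factorial (k + 1)) = 1 / (k + 1) := by
      have h2 : ((Nat.factorial (k + 1) : ℝ)) = (k + 1) * Nat.factorial k := by
        exact_mod_cast Nat.factorial_succ k
      rw [h2]
      have : (Nat.factorial k : ℝ) ≠ 0 := by positivity
      field_simp
    have hle : (1:ℝ) / (k + 1) ≤ Nat.factorial k * T (k + 1) 1 := by
      rw [← hfact]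
      apply mul_le_mul_of_nonneg_left hT1 (by positivity)
    have hinv : 1 / (Nat.factorial k * T (k + 1) 1) ≤ (k:ℝ) + 1 := by
      have := one_div_le_one_div_of_le (by positivity : (0:ℝ) < 1 / (k + 1)) hle
      rwa [one_div_one_div] at this
    linarith
  have hgμ : μ ≤ g μ := by
    have hμ0 : (0:ℝ) < μ := by linarith
    rw [hgφ μ hμ0]
    have hT := T_pos (k + 1) hμ0.le
    have : (0:ℝ) < 1 / (Nat.factorial k * T (k + 1) μ) := by positivity
    linarith
  obtain ⟨l, hl, hgl⟩ := intermediate_value_Icc h1μ hgcont ⟨hg1, hgμ⟩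
  have hl0 : (0:ℝ) < l := lt_of_lt_of_le one_pos hl.1
  exact ⟨l, hl0, hl.2, by rw [← hgl, hgφ l hl0]⟩

end Stmt0Aux

/-- For every integer `k ≥ 0` and every real `μ ≥ k + 2`, there exists a unique `λ > 0`
with `λ f_k(λ) = μ f_{k+1}(λ)`; moreover this `λ` satisfies `λ ≤ μ`. -/
theorem stmt0 (k : ℕ) (μ : ℝ) (hμ : (k : ℝ) + 2 ≤ μ) :
    (∃! l : ℝ, 0 < l ∧ l * fpois k l = μ * fpois (k + 1) l) ∧
    (∀ l : ℝ, 0 < l → l * fpois k l = μ * fpois (k + 1) l → l ≤ μ) := by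
  open Stmt0Aux in
  obtain ⟨l, hl0, hlμ, hφl⟩ := Stmt0Aux.exists_root k μ hμ
  constructor
  · refine ⟨l, ⟨hl0, (Stmt0Aux.equation_iff k hl0).mpr hφl⟩, ?_⟩
    rintro y ⟨hy0, hy⟩
    have h1 := (Stmt0Aux.equation_iff k hy0).mp hy
    rcases lt_trichotomy y l with h | h | h
    · have := Stmt0Aux.phi_lt k hy0 h
      linarith [h1, hφl]
    · exact h
    · have := Stmt0Aux.phi_lt k hl0 h
      linarith [h1, hφl]
  · intro l' hl' heq
    have h1 := (Stmt0Aux.equation_iff k hl').mp heq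
    have hTpos := Stmt0Aux.T_pos (k + 1) hl'.le
    have : 0 < 1 / ((Nat.factorial k : ℝ) * Stmt0Aux.T (k + 1) l') := by positivity
    linarith
end

section
/- Fix a constant c > 1. Suppose for each k we have μ = μ(k) ≥ c·k with μ ≥ k+2, and let λ = λ(k) be the unique positive real satisfying λ·f_k(λ) = μ·f_{k+1}(λ). Then μ(k) − λ(k) → 0 and f_k(λ(k)) → 1 as k → ∞. -/
noncomputable def pp (i : ℕ) (x : ℝ) : ℝ := Real.exp (-x) * x ^ i / (Nat.factorial i)

lemma pp_nonneg (i : ℕ) {x : ℝ} (hx : 0 ≤ x) : 0 ≤ pp i x := by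
  unfold pp; positivity

lemma pp_pos (i : ℕ) {x : ℝ} (hx : 0 < x) : 0 < pp i x := by
  unfold pp; positivity

lemma summable_pp (x : ℝ) : Summable (fun i => pp i x) := by
  unfold pp
  simpa [mul_div_assoc] using (Real.summable_pow_div_factorial x).mul_left (Real.exp (-x))

lemma exp_eq_tsum' (x : ℝ) : Real.exp x = ∑' n : ℕ, x ^ n / (Nat.factorial n) := by
  rw [Real.exp_eq_exp_ℝ, NormedSpace.exp_eq_tsum_div]

lemma tsum_pp (x : ℝ) : ∑' i, pp i x = 1 := by
  unfold pp
  simp_rw [mul_div_assoc]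
  rw [tsum_mul_left, ← exp_eq_tsum', ← Real.exp_add]
  simp

lemma pow_div_factorial_le_exp {x : ℝ} (hx : 0 ≤ x) (n : ℕ) :
    x ^ n / (Nat.factorial n) ≤ Real.exp x := by
  rw [exp_eq_tsum' x]
  exact Summable.le_tsum (Real.summable_pow_div_factorial x) n
    (fun j _ => by positivity)

lemma fpois_eq (k : ℕ) (x : ℝ) : fpois k x = ∑' i, if k ≤ i then pp i x else 0 := rfl

lemma summable_fpois (k : ℕ) {x : ℝ} (hx : 0 ≤ x) :
    Summable (fun i => if k ≤ i then pp i x else 0) := by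
  apply (summable_pp x).of_nonneg_of_le (fun i => ?_) (fun i => ?_) <;> by_cases h : k ≤ i <;>
    simp [h, pp_nonneg i hx]

lemma fpois_step (k : ℕ) {x : ℝ} (hx : 0 ≤ x) : fpois k x = pp k x + fpois (k + 1) x := by
  rw [fpois_eq, fpois_eq]
  have h : (fun i => if k ≤ i then pp i x else 0)
      = fun i => (if i = k then pp k x else 0) + (if k + 1 ≤ i then pp i x else 0) := by
    funext i
    rcases lt_trichotomy i k with h | h | h
    · simp [h.ne, not_le.2 h, Nat.not_le.2 (h.trans (Nat.lt_succ_self k))]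
    · simp [h, Nat.not_succ_le_self]
    · simp [h.ne', h.le, Nat.succ_le_of_lt h, h]
  rw [h, Summable.tsum_add (hasSum_ite_eq k (pp k x)).summable (summable_fpois (k+1) hx)]
  rw [tsum_ite_eq]

lemma fpois_nonneg (k : ℕ) {x : ℝ} (hx : 0 ≤ x) : 0 ≤ fpois k x := by
  rw [fpois_eq]
  exact tsum_nonneg (fun i => by by_cases h : k ≤ i <;> simp [h, pp_nonneg i hx])

lemma pp_le_fpois (k : ℕ) {x : ℝ} (hx : 0 ≤ x) : pp k x ≤ fpois k x := by
  rw [fpois_eq]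
  have := Summable.le_tsum (summable_fpois k hx) k
    (fun j _ => by by_cases h : k ≤ j <;> simp [h, pp_nonneg j hx])
  simpa using this

lemma fpois_pos (k : ℕ) {x : ℝ} (hx : 0 < x) : 0 < fpois k x :=
  lt_of_lt_of_le (pp_pos k hx) (pp_le_fpois k hx.le)

lemma fpois_zero (x : ℝ) : fpois 0 x = 1 := by
  rw [fpois_eq]
  simp only [Nat.zero_le, if_true]
  exact tsum_pp x

lemma fpois_le_one (k : ℕ) {x : ℝ} (hx : 0 ≤ x) : fpois k x ≤ 1 := by
  rw [← fpois_zero x, fpois_eq, fpois_eq]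
  refine Summable.tsum_le_tsum (fun i => ?_) (summable_fpois k hx) (summable_fpois 0 hx)
  by_cases h : k ≤ i <;> simp [h, pp_nonneg i hx]

lemma fpois_succ_le (k : ℕ) {x : ℝ} (hx : 0 ≤ x) : fpois (k+1) x ≤ fpois k x := by
  rw [fpois_step k hx]
  have := pp_nonneg k hx; linarith

lemma sum_range_pp (k : ℕ) {x : ℝ} (hx : 0 ≤ x) :
    (∑ i ∈ Finset.range (k+1), pp i x) + fpois (k+1) x = 1 := by
  induction k with
  | zero => simp [Finset.sum_range_one, ← fpois_step 0 hx, fpois_zero]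
  | succ n ih =>
    rw [Finset.sum_range_succ, add_assoc, ← fpois_step (n+1) hx, ih]

lemma pp_succ (i : ℕ) (x : ℝ) : pp (i+1) x = pp i x * (x / (i+1)) := by
  unfold pp
  rw [Nat.factorial_succ, pow_succ]
  push_cast
  field_simp

lemma pp_mono {i j : ℕ} (hij : i ≤ j) {x : ℝ} (hx : 0 ≤ x) (hjx : (j : ℝ) ≤ x) :
    pp i x ≤ pp j x := by
  induction j with
  | zero => simp_all
  | succ n ih =>
    rcases Nat.lt_succ_iff_lt_or_eq.mp (Nat.lt_succ_of_le hij) with h | h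
    · have hnx : (n : ℝ) ≤ x := le_trans (by push_cast; linarith) hjx
      refine le_trans (ih (Nat.lt_succ_iff.mp h) hnx) ?_
      rw [pp_succ]
      have h1 : (0:ℝ) < (n:ℝ) + 1 := by positivity
      have h2 : (1:ℝ) ≤ x / ((n:ℝ)+1) := by
        rw [le_div_iff₀ h1]; push_cast at hjx ⊢; linarith
      nlinarith [pp_nonneg n hx]
    · subst h; exact le_refl _

lemma pp_ratio_ge (k m : ℕ) {x : ℝ} (hx : 0 < x) :
    ∀ j, j ≤ m → pp k x * (x/((k:ℝ)+m))^j ≤ pp (k+j) x := by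
  intro j
  induction j with
  | zero => simp
  | succ n ih =>
    intro hn
    have hkm : (0:ℝ) < (k:ℝ) + m := by
      have : (0:ℝ) < x / ((k:ℝ)+m) → True := fun _ => trivial
      have hm : 1 ≤ m := le_trans (Nat.succ_le_succ (Nat.zero_le n)) hn
      have : (1:ℝ) ≤ (m:ℝ) := by exact_mod_cast hm
      positivity
    have h1 : pp k x * (x/((k:ℝ)+m))^(n+1)
        = (pp k x * (x/((k:ℝ)+m))^n) * (x/((k:ℝ)+m)) := by ring
    rw [h1, show k + (n+1) = (k+n) + 1 from rfl, pp_succ]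
    have h2 : x/((k:ℝ)+m) ≤ x/((k:ℝ)+n+1) := by
      apply div_le_div_of_nonneg_left hx.le (by positivity)
      push_cast
      have : (n:ℝ) + 1 ≤ (m:ℝ) := by exact_mod_cast hn
      linarith
    have h3 := ih (le_trans (Nat.le_succ n) hn)
    have h4 : 0 ≤ x/((k:ℝ)+m) := by positivity
    calc pp k x * (x/((k:ℝ)+m))^n * (x/((k:ℝ)+m))
        ≤ pp (k+n) x * (x/((k:ℝ)+m)) := by
          apply mul_le_mul_of_nonneg_right h3 h4
      _ ≤ pp (k+n) x * (x/((k:ℝ)+n+1)) := by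
          apply mul_le_mul_of_nonneg_left h2 (pp_nonneg _ hx.le)
      _ = pp (k+n) x * (x / ((k:ℝ)+(n:ℝ)+1)) := by norm_num
      _ = pp (k+n) x * (x / (((k+n : ℕ):ℝ)+1)) := by push_cast; ring_nf

lemma tail_ge_sum (k m : ℕ) {x : ℝ} (hx : 0 ≤ x) :
    (∑ j ∈ Finset.range m, pp (k+1+j) x) ≤ fpois (k+1) x := by
  rw [fpois_eq]
  have hinj : Function.Injective (fun j : ℕ => k+1+j) := fun a b h => by dsimp at h; omega
  have := Summable.sum_le_tsum (f := fun i => if k+1 ≤ i then pp i x else 0)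
    ((Finset.range m).image (fun j => k+1+j))
    (fun i _ => by by_cases h : k+1 ≤ i <;> simp [h, pp_nonneg i hx])
    (summable_fpois (k+1) hx)
  rw [Finset.sum_image (fun a _ b _ h => hinj h)] at this
  simpa using this

lemma key_bound (k m : ℕ) (hm : 1 ≤ m) {L M : ℝ} (hL : 0 < L) (hLm : L < (k:ℝ)+m)
    (heq : (M - L) * fpois (k+1) L = L * pp k L) :
    M * (1 - (L/((k:ℝ)+m))^m) ≤ (k:ℝ)+m := by
  have hkm : (0:ℝ) < (k:ℝ)+m := lt_trans hL hLm
  set q := L/((k:ℝ)+m) with hqdef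
  have hq0 : 0 < q := div_pos hL hkm
  have hq1 : q < 1 := (div_lt_one hkm).mpr hLm
  have hLq : L = q * ((k:ℝ)+m) := by rw [hqdef, div_mul_cancel₀ _ hkm.ne']
  -- tail lower bound
  have h1 : pp k L * (∑ j ∈ Finset.range m, q^(j+1)) ≤ fpois (k+1) L := by
    rw [Finset.mul_sum]
    refine le_trans (Finset.sum_le_sum (fun j hj => ?_)) (tail_ge_sum k m hL.le)
    have := pp_ratio_ge k m hL (j+1) (Nat.succ_le_of_lt (Finset.mem_range.mp hj))
    rwa [show k + (j+1) = k+1+j by omega] at this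
  -- M - L > 0
  have hfpos : 0 < fpois (k+1) L := fpois_pos (k+1) hL
  have hpp : 0 < pp k L := pp_pos k hL
  have hML : 0 < M - L := by
    by_contra h
    push_neg at h
    nlinarith
  -- (M-L) * S ≤ L
  have h2 : (M - L) * (∑ j ∈ Finset.range m, q^(j+1)) ≤ L := by
    have hs : 0 ≤ ∑ j ∈ Finset.range m, q^(j+1) :=
      Finset.sum_nonneg (fun j _ => by positivity)
    have := mul_le_mul_of_nonneg_left h1 hML.le
    rw [heq] at this
    nlinarith
  -- geometric sum formula
  have h3 : (∑ j ∈ Finset.range m, q^(j+1)) = q * (1 - q^m) / (1 - q) := by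
    have : (∑ j ∈ Finset.range m, q^(j+1)) = q * ∑ j ∈ Finset.range m, q^j := by
      rw [Finset.mul_sum]; exact Finset.sum_congr rfl (fun j _ => by ring)
    rw [this, geom_sum_eq (ne_of_lt hq1),
      show (q^m - 1)/(q-1) = (1-q^m)/(1-q) by rw [← neg_div_neg_eq]; congr 1 <;> ring]
    rw [mul_div_assoc]
  rw [h3, hLq] at h2
  have hq1' : 0 < 1 - q := by linarith
  have hqm : 0 < q^m := pow_pos hq0 m
  have hqm1 : q^m < 1 := pow_lt_one₀ hq0.le hq1 (by omega)
  rw [← mul_div_assoc] at h2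
  have h2' := (div_le_iff₀ hq1').mp h2
  have h4 : (M - q*((k:ℝ)+m)) * (1 - q^m) ≤ ((k:ℝ)+m) * (1 - q) := by
    refine le_of_mul_le_mul_left ?_ hq0
    linear_combination h2'
  nlinarith [mul_pos hL hqm, mul_pos hq0 hkm]

lemma Lpp_bound {δ : ℝ} (hδ : 0 < δ) (k : ℕ) {L : ℝ} (hL0 : 0 < L) (hL : (1+δ)*k ≤ L) :
    L * pp k L ≤ ((k:ℝ)+1) * (1+δ) * ((1+δ)*Real.exp (-δ))^k := by
  have ht : (0:ℝ) < 1+δ := by linarith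
  have hfac : (0:ℝ) < (Nat.factorial k : ℝ) := by positivity
  have h1 := pow_div_factorial_le_exp (x := L/(1+δ)) (by positivity) (k+1)
  rw [div_pow] at h1
  have hfac1 : (0:ℝ) < (Nat.factorial (k+1) : ℝ) := by positivity
  have h2 : L^(k+1) ≤ Real.exp (L/(1+δ)) * (Nat.factorial (k+1) : ℝ) * (1+δ)^(k+1) := by
    have h1' := (div_le_iff₀ hfac1).mp h1
    have h1'' := (div_le_iff₀ (by positivity : (0:ℝ) < (1+δ)^(k+1))).mp h1'
    nlinarith
  have hpp : L * pp k L = Real.exp (-L) * L^(k+1) / (Nat.factorial k : ℝ) := by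
    unfold pp; rw [pow_succ]; ring
  rw [hpp]
  have hexp : Real.exp (-L) * Real.exp (L/(1+δ)) = Real.exp (-(L*δ/(1+δ))) := by
    rw [← Real.exp_add]; congr 1; field_simp; ring
  have hmono : Real.exp (-(L*δ/(1+δ))) ≤ Real.exp (-(δ*k)) := by
    apply Real.exp_le_exp.mpr
    have h3 : δ*(k:ℝ) ≤ L*δ/(1+δ) := by
      rw [le_div_iff₀ ht]; nlinarith
    linarith
  calc Real.exp (-L) * L^(k+1) / (Nat.factorial k : ℝ)
      ≤ Real.exp (-L) * (Real.exp (L/(1+δ)) * (Nat.factorial (k+1):ℝ) * (1+δ)^(k+1))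
          / (Nat.factorial k : ℝ) := by gcongr
    _ = ((k:ℝ)+1) * (1+δ)^(k+1) * (Real.exp (-L) * Real.exp (L/(1+δ))) := by
        rw [Nat.factorial_succ]
        push_cast
        field_simp
    _ = ((k:ℝ)+1) * (1+δ)^(k+1) * Real.exp (-(L*δ/(1+δ))) := by rw [hexp]
    _ ≤ ((k:ℝ)+1) * (1+δ)^(k+1) * Real.exp (-(δ*k)) := by
        apply mul_le_mul_of_nonneg_left hmono (by positivity)
    _ = ((k:ℝ)+1) * (1+δ) * ((1+δ)*Real.exp (-δ))^k := by
        rw [show -(δ*(k:ℝ)) = (k:ℕ) * (-δ) by push_cast; ring, Real.exp_nat_mul,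
          mul_pow, pow_succ]
        ring

lemma fpois_lower (k : ℕ) {L : ℝ} (hL0 : 0 < L) (hLk : (k:ℝ) ≤ L) :
    1 - ((k:ℝ)+1) * pp k L ≤ fpois (k+1) L := by
  have h := sum_range_pp k hL0.le
  have hsum : ∑ i ∈ Finset.range (k+1), pp i L ≤ ((k:ℝ)+1) * pp k L := by
    calc ∑ i ∈ Finset.range (k+1), pp i L
        ≤ ∑ _i ∈ Finset.range (k+1), pp k L :=
          Finset.sum_le_sum (fun i hi =>
            pp_mono (Nat.lt_succ_iff.mp (Finset.mem_range.mp hi)) hL0.le hLk)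
      _ = ((k:ℝ)+1) * pp k L := by
          rw [Finset.sum_const, Finset.card_range, nsmul_eq_mul]; push_cast; ring
  linarith

lemma diff_eq_aux (k : ℕ) {L M : ℝ} (hL : 0 ≤ L)
    (he : L * fpois k L = M * fpois (k+1) L) :
    (M - L) * fpois (k+1) L = L * pp k L := by
  have hs := fpois_step k hL
  linear_combination L * hs - he

set_option maxHeartbeats 2000000 in
/-- Fix `c > 1`. If for each `k` we have `μ k ≥ c·k`, `μ k ≥ k + 2`, and `lam k` is the
(unique) positive root of `λ f_k(λ) = μ(k) f_{k+1}(λ)`, then `μ k − lam k → 0` and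
`f_k(lam k) → 1` as `k → ∞`. -/
theorem stmt1 (c : ℝ) (hc : 1 < c) (μ lam : ℕ → ℝ)
    (hμc : ∀ k : ℕ, c * k ≤ μ k)
    (hμ2 : ∀ k : ℕ, (k : ℝ) + 2 ≤ μ k)
    (hlam_pos : ∀ k : ℕ, 0 < lam k)
    (hlam_eq : ∀ k : ℕ, lam k * fpois k (lam k) = μ k * fpois (k + 1) (lam k)) :
    Filter.Tendsto (fun k => μ k - lam k) Filter.atTop (nhds 0) ∧
    Filter.Tendsto (fun k => fpois k (lam k)) Filter.atTop (nhds 1) := by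
  have diff_eq : ∀ k : ℕ, (μ k - lam k) * fpois (k+1) (lam k) = lam k * pp k (lam k) := by
    intro k
    exact diff_eq_aux k (hlam_pos k).le (hlam_eq k)
  set δ : ℝ := (c-1)/3 with hδdef
  have hδ : 0 < δ := by simp only [hδdef]; linarith
  have hcδ : c = 1 + 2*δ + δ := by simp only [hδdef]; ring
  -- Step 1: eventually lam k ≥ (1+δ) k
  set qb : ℝ := (1+δ)/(1+2*δ) with hqbdef
  have hqb0 : 0 ≤ qb := by positivity
  have hqb1 : qb < 1 := by
    rw [hqbdef, div_lt_one (by linarith)]; linarith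
  set m : ℕ → ℕ := fun k => ⌈2*δ*(k:ℝ)⌉₊ + 1 with hmdef
  have hm_tendsto : Filter.Tendsto m Filter.atTop Filter.atTop := by
    apply Filter.tendsto_atTop_mono (fun k => Nat.le_succ _)
    exact tendsto_nat_ceil_atTop.comp
      ((tendsto_natCast_atTop_atTop (R := ℝ)).const_mul_atTop (by positivity))
  have hqbm : Filter.Tendsto (fun k => qb ^ (m k)) Filter.atTop (nhds 0) :=
    (tendsto_pow_atTop_nhds_zero_of_lt_one hqb0 hqb1).comp hm_tendsto
  have hstep1 : ∀ᶠ k : ℕ in Filter.atTop, (1+δ)*(k:ℝ) ≤ lam k := by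
    have h1 : ∀ᶠ k : ℕ in Filter.atTop, qb ^ (m k) ≤ δ/(2*c) :=
      hqbm.eventually_le_const (by positivity)
    have h2 : ∀ᶠ k : ℕ in Filter.atTop, (4:ℝ)/δ < (k:ℝ) :=
      tendsto_natCast_atTop_atTop.eventually_gt_atTop _
    have h3 : ∀ᶠ k : ℕ in Filter.atTop, 1 ≤ k := Filter.eventually_ge_atTop 1
    filter_upwards [h1, h2, h3] with k hk1 hk2 hk3
    by_contra hcon
    push_neg at hcon
    have hk0 : (1:ℝ) ≤ (k:ℝ) := by exact_mod_cast hk3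
    have hmlb : 2*δ*(k:ℝ) ≤ (m k : ℝ) := by
      rw [hmdef]; push_cast
      have := Nat.le_ceil (2*δ*(k:ℝ))
      linarith
    have hmub : (m k : ℝ) ≤ 2*δ*(k:ℝ) + 2 := by
      rw [hmdef]; push_cast
      have := Nat.ceil_lt_add_one (by positivity : (0:ℝ) ≤ 2*δ*(k:ℝ))
      linarith
    have hLm : lam k < (k:ℝ) + (m k) := by nlinarith
    have hkey := key_bound k (m k) (Nat.le_add_left 1 _) (hlam_pos k) hLm (diff_eq k)
    have hmk0 : (0:ℝ) ≤ (m k : ℝ) := Nat.cast_nonneg _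
    have hkm0 : (0:ℝ) < (k:ℝ) + m k := by linarith
    have hq : lam k / ((k:ℝ) + m k) ≤ qb := by
      rw [hqbdef, div_le_div_iff₀ hkm0 (by linarith)]
      nlinarith [(hlam_pos k).le]
    have hqnn : 0 ≤ lam k / ((k:ℝ) + m k) := div_nonneg (hlam_pos k).le hkm0.le
    have hqm : (lam k / ((k:ℝ) + m k)) ^ (m k) ≤ qb ^ (m k) :=
      pow_le_pow_left₀ hqnn hq _
    have hM : c * (k:ℝ) ≤ μ k := hμc k
    have hMpos : 0 < μ k := lt_of_lt_of_le (by nlinarith) hM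
    have hfin : μ k * (1 - δ/(2*c)) ≤ (k:ℝ) + m k := by
      calc μ k * (1 - δ/(2*c)) ≤ μ k * (1 - qb ^ (m k)) := by
            apply mul_le_mul_of_nonneg_left (by linarith) hMpos.le
        _ ≤ μ k * (1 - (lam k / ((k:ℝ) + m k)) ^ (m k)) := by
            apply mul_le_mul_of_nonneg_left (by linarith) hMpos.le
        _ ≤ (k:ℝ) + m k := hkey
    have hc0 : 0 < c := by linarith
    have hdiv : δ/(2*c) < 1 := by
      rw [div_lt_one (by linarith)]
      simp only [hδdef]; linarith
    have h6 : c*(k:ℝ)*(1-δ/(2*c)) ≤ μ k * (1-δ/(2*c)) :=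
      mul_le_mul_of_nonneg_right hM (by linarith)
    have h7 : c*(k:ℝ)*(1-δ/(2*c)) = c*(k:ℝ) - δ*(k:ℝ)/2 := by
      field_simp
    have h8 : c*(k:ℝ) = (k:ℝ) + 2*(δ*(k:ℝ)) + δ*(k:ℝ) := by rw [hcδ]; ring
    have hk2' : 4 < δ*(k:ℝ) := by
      rw [← div_lt_iff₀' hδ]; exact hk2
    linarith
  -- Step 2: the decaying bound
  set ρ : ℝ := (1+δ)*Real.exp (-δ) with hρdef
  have hρ0 : 0 ≤ ρ := by positivity
  have hρ1 : ρ < 1 := by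
    rw [hρdef]
    have h := Real.add_one_lt_exp (ne_of_gt hδ)
    have he : 0 < Real.exp (-δ) := Real.exp_pos _
    have h2 : (1+δ) * Real.exp (-δ) < Real.exp δ * Real.exp (-δ) := by nlinarith
    rwa [← Real.exp_add, add_neg_cancel, Real.exp_zero] at h2
  set b : ℕ → ℝ := fun k => ((k:ℝ)+1)*(1+δ)*ρ^k with hbdef
  have hb0 : ∀ k, 0 ≤ b k := fun k => by rw [hbdef]; positivity
  have hb : Filter.Tendsto b Filter.atTop (nhds 0) := by
    have h1 : Filter.Tendsto (fun k : ℕ => (k:ℝ)^1 * ρ^k) Filter.atTop (nhds 0) :=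
      (summable_pow_mul_geometric_of_norm_lt_one (R := ℝ) 1
        (by rwa [Real.norm_eq_abs, abs_of_nonneg hρ0])).tendsto_atTop_zero
    have h2 : Filter.Tendsto (fun k : ℕ => ρ^k) Filter.atTop (nhds 0) :=
      tendsto_pow_atTop_nhds_zero_of_lt_one hρ0 hρ1
    have h3 := ((h1.add h2).const_mul (1+δ))
    simp only [add_zero, mul_zero] at h3
    convert h3 using 2 with k
    rw [hbdef]; push_cast; ring
  -- Step 3: eventual bounds
  have hev : ∀ᶠ k : ℕ in Filter.atTop,
      (0 ≤ μ k - lam k ∧ μ k - lam k ≤ 2 * b k) ∧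
      (1 - b k ≤ fpois k (lam k) ∧ fpois k (lam k) ≤ 1) := by
    have h4 : ∀ᶠ k : ℕ in Filter.atTop, (1:ℝ)/δ ≤ (k:ℝ) :=
      tendsto_natCast_atTop_atTop.eventually_ge_atTop _
    have h5 : ∀ᶠ k : ℕ in Filter.atTop, b k ≤ 1/2 :=
      hb.eventually_le_const (by norm_num)
    filter_upwards [hstep1, h4, h5] with k hk1 hk4 hk5
    set L := lam k with hLdef
    have hL0 : 0 < L := hlam_pos k
    have hk1' : (k:ℝ) + 1 ≤ L := by
      have : δ * (k:ℝ) ≥ 1 := by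
        rw [ge_iff_le, ← div_le_iff₀' hδ]; exact hk4
      nlinarith
    have hkL : (k:ℝ) ≤ L := by linarith
    have hLpp : L * pp k L ≤ b k := by
      have := Lpp_bound hδ k hL0 hk1
      rw [hbdef]
      simp only [hρdef]
      exact this
    have hkpp : ((k:ℝ)+1) * pp k L ≤ b k := by
      have := pp_nonneg k hL0.le
      nlinarith
    have hflow : 1 - b k ≤ fpois (k+1) L := le_trans (by linarith) (fpois_lower k hL0 hkL)
    have hfhalf : (1:ℝ)/2 ≤ fpois (k+1) L := by linarith
    have hfpos : 0 < fpois (k+1) L := by linarith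
    have heq := diff_eq k
    have hML : 0 < μ k - lam k := by
      by_contra h
      push_neg at h
      nlinarith [pp_pos k hL0]
    constructor
    · refine ⟨hML.le, ?_⟩
      nlinarith [hfhalf, hLpp]
    · constructor
      · exact le_trans hflow (fpois_succ_le k hL0.le)
      · exact fpois_le_one k hL0.le
  constructor
  · apply squeeze_zero' (hev.mono (fun k hk => hk.1.1)) (hev.mono (fun k hk => hk.1.2))
    have := hb.const_mul 2
    simpa using this
  · apply tendsto_of_tendsto_of_tendsto_of_le_of_le'
      (g := fun k : ℕ => 1 - b k) (h := fun _ : ℕ => (1:ℝ))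
    · simpa using (tendsto_const_nhds.sub hb)
    · exact tendsto_const_nhds
    · exact hev.mono (fun k hk => hk.2.1)
    · exact hev.mono (fun k hk => hk.2.2)
end

section
/- Let h ≥ 2 be an integer and let u_2, …, u_h be nonnegative reals with Σ_{j=2}^{h} (j−1)·u_j = t. Then u_2^{u_2} · u_3^{2u_3} · ⋯ · u_h^{(h−1)u_h} ≥ (2t / (h(h−1)))^t, with the convention 0^0 = 1. -/
lemma sum_coeff_aux (h : ℕ) (hh : 2 ≤ h) :
    ∑ j ∈ Finset.Icc 2 h, ((j : ℝ) - 1) = (h : ℝ) * ((h : ℝ) - 1) / 2 := by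
  induction h, hh using Nat.le_induction with
  | base => norm_num
  | succ n hn ih =>
    rw [Finset.sum_Icc_succ_top (by omega : 2 ≤ n + 1), ih]
    push_cast
    ring

/-- For `h ≥ 2` and nonnegative reals `u_2, …, u_h` with `∑_{j=2}^h (j−1) u_j = t`,
we have `∏_{j=2}^h u_j ^ ((j−1) u_j) ≥ (2t/(h(h−1)))^t` (real powers, `0^0 = 1`). -/
theorem stmt3 (h : ℕ) (hh : 2 ≤ h) (u : ℕ → ℝ)
    (hu : ∀ j ∈ Finset.Icc 2 h, 0 ≤ u j) (t : ℝ)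
    (ht : ∑ j ∈ Finset.Icc 2 h, ((j : ℝ) - 1) * u j = t) :
    (2 * t / ((h : ℝ) * ((h : ℝ) - 1))) ^ t ≤
      ∏ j ∈ Finset.Icc 2 h, (u j) ^ (((j : ℝ) - 1) * u j) := by
  set s := Finset.Icc 2 h with hs
  have ha : ∀ j ∈ s, (1 : ℝ) ≤ (j : ℝ) - 1 := by
    intro j hj
    have : 2 ≤ j := (Finset.mem_Icc.mp hj).1
    have : (2 : ℝ) ≤ (j : ℝ) := by exact_mod_cast this
    linarith
  have hxnn : ∀ j ∈ s, 0 ≤ ((j : ℝ) - 1) * u j := fun j hj =>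
    mul_nonneg (by linarith [ha j hj]) (hu j hj)
  have ht0 : 0 ≤ t := ht ▸ Finset.sum_nonneg hxnn
  rcases eq_or_lt_of_le ht0 with h0 | hpos
  · -- t = 0 case
    have hall : ∀ j ∈ s, ((j : ℝ) - 1) * u j = 0 := by
      intro j hj
      have := (Finset.sum_eq_zero_iff_of_nonneg hxnn).mp (ht.trans h0.symm)
      exact this j hj
    rw [← h0, Real.rpow_zero]
    calc (1 : ℝ) = ∏ j ∈ s, (1 : ℝ) := by simp
      _ ≤ ∏ j ∈ s, (u j) ^ (((j : ℝ) - 1) * u j) := by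
          apply le_of_eq
          apply Finset.prod_congr rfl
          intro j hj
          rw [hall j hj, Real.rpow_zero]
  · -- t > 0 case
    have hh2 : (2 : ℝ) ≤ (h : ℝ) := by exact_mod_cast hh
    have hden : (0 : ℝ) < (h : ℝ) * ((h : ℝ) - 1) := by nlinarith
    set c := 2 * t / ((h : ℝ) * ((h : ℝ) - 1)) with hc
    have hcpos : 0 < c := div_pos (by linarith) hden
    set w : ℕ → ℝ := fun j => ((j : ℝ) - 1) * u j / t with hw
    have hwnn : ∀ j ∈ s, 0 ≤ w j := fun j hj => div_nonneg (hxnn j hj) ht0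
    have hwsum : ∑ j ∈ s, w j = 1 := by
      rw [hw]
      rw [← Finset.sum_div, ht, div_self hpos.ne']
    have hznn : ∀ j ∈ s, 0 ≤ c / u j := fun j hj => div_nonneg hcpos.le (hu j hj)
    have key := Real.geom_mean_le_arith_mean_weighted s w (fun j => c / u j) hwnn hwsum hznn
    have hsum : ∑ j ∈ s, w j * (c / u j) ≤ 1 := by
      have hterm : ∀ j ∈ s, w j * (c / u j) ≤ c / t * ((j : ℝ) - 1) := by
        intro j hj
        rcases eq_or_lt_of_le (hu j hj) with h0' | hpos'
        · rw [hw]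
          simp only [← h0']
          rw [div_zero, mul_zero]
          exact mul_nonneg (div_nonneg hcpos.le ht0) (by linarith [ha j hj])
        · have huj := hpos'.ne'
          rw [hw]
          apply le_of_eq
          field_simp
      calc ∑ j ∈ s, w j * (c / u j) ≤ ∑ j ∈ s, c / t * ((j : ℝ) - 1) :=
            Finset.sum_le_sum hterm
        _ = c / t * ((h : ℝ) * ((h : ℝ) - 1) / 2) := by
            rw [← Finset.mul_sum, hs, sum_coeff_aux h hh]
        _ = 1 := by
            rw [hc]; field_simp [show (h : ℝ) - 1 ≠ 0 by linarith]
    have key2 : ∏ j ∈ s, (c / u j) ^ (w j) ≤ 1 := key.trans hsum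
    have hPpos : ∀ j ∈ s, 0 < (u j) ^ (w j) := by
      intro j hj
      rcases eq_or_lt_of_le (hu j hj) with h0' | hpos'
      · have : w j = 0 := by rw [hw]; simp [← h0']
        rw [this, Real.rpow_zero]; norm_num
      · exact Real.rpow_pos_of_pos hpos' _
    have hsplit : ∏ j ∈ s, (c / u j) ^ (w j)
        = c / ∏ j ∈ s, (u j) ^ (w j) := by
      have : ∀ j ∈ s, (c / u j) ^ (w j) = c ^ (w j) / (u j) ^ (w j) := fun j hj =>
        Real.div_rpow hcpos.le (hu j hj) _
      rw [Finset.prod_congr rfl this, Finset.prod_div_distrib,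
        ← Real.rpow_sum_of_pos hcpos, hwsum, Real.rpow_one]
    have hprodpos : 0 < ∏ j ∈ s, (u j) ^ (w j) := Finset.prod_pos hPpos
    have hcle : c ≤ ∏ j ∈ s, (u j) ^ (w j) := by
      rw [hsplit] at key2
      exact (div_le_one hprodpos).mp key2
    have final : c ^ t ≤ (∏ j ∈ s, (u j) ^ (w j)) ^ t :=
      Real.rpow_le_rpow hcpos.le hcle ht0
    calc c ^ t ≤ (∏ j ∈ s, (u j) ^ (w j)) ^ t := final
      _ = ∏ j ∈ s, ((u j) ^ (w j)) ^ t := by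
          rw [← Real.finset_prod_rpow s _ (fun j hj => (hPpos j hj).le)]
      _ = ∏ j ∈ s, (u j) ^ (((j : ℝ) - 1) * u j) := by
          apply Finset.prod_congr rfl
          intro j hj
          rw [← Real.rpow_mul (hu j hj), hw]
          simp only []
          rw [div_mul_cancel₀ _ hpos.ne']
end

section
/- Let H be a multihypergraph on vertex set V whose hyperedge sizes all lie between h−w+1 and h (for fixed integers h > w > 0), and let k be a positive integer. Then H has a (w,k)-orientation if and only if for every subset S ⊆ V, d(H_S) − (h−w)·e(H_S) ≤ k|S|, where H_S is the subhypergraph w-induced by S, d(H_S) is its degree sum, and e(H_S) its number of hyperedges. -/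
open scoped Classical

set_option linter.unusedSectionVars false

namespace Stmt9

open Finset

variable {V ι : Type*} [Fintype V] [DecidableEq V] [Fintype ι]

/-- number of hyperedges whose positive set contains `v`. -/
noncomputable def deg (O : ι → Finset V) (v : V) : ℕ :=
  (Finset.univ.filter fun i => v ∈ O i).card

lemma sum_inter_card (O : ι → Finset V) (S : Finset V) :
    ∑ i, (O i ∩ S).card = ∑ v ∈ S, deg O v := by
  have h1 : ∀ i : ι, (O i ∩ S).card = ∑ v ∈ S, (if v ∈ O i then 1 else 0) := by
    intro i
    rw [Finset.inter_comm, ← Finset.filter_mem_eq_inter, Finset.card_filter]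
  simp only [h1, deg, Finset.card_filter]
  exact Finset.sum_comm

/-- a partial orientation respecting demands `s` and capacity `k`. -/
def Valid (k : ℕ) (E : ι → Finset V) (s : ι → ℕ) (O : ι → Finset V) : Prop :=
  (∀ i, O i ⊆ E i) ∧ (∀ i, (O i).card ≤ s i) ∧ ∀ v, deg O v ≤ k

/-- reachability by alternating paths from a deficient hyperedge. -/
inductive Reach (E : ι → Finset V) (s : ι → ℕ) (O : ι → Finset V) : ι ⊕ V → Prop
  | base (i : ι) : (O i).card < s i → Reach E s O (Sum.inl i)
  | stepE (u : V) (i : ι) : Reach E s O (Sum.inr u) → u ∈ O i → Reach E s O (Sum.inl i)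
  | stepV (i : ι) (v : V) : Reach E s O (Sum.inl i) → v ∈ E i → v ∉ O i →
      Reach E s O (Sum.inr v)

/-- an alternating path ending at the hyperedge `e m`. -/
def EPath (E : ι → Finset V) (s : ι → ℕ) (O : ι → Finset V) (m : ℕ)
    (e : ℕ → ι) (a : ℕ → V) : Prop :=
  (O (e 0)).card < s (e 0) ∧ (∀ j < m, a j ∈ E (e j) ∧ a j ∉ O (e j)) ∧
    ∀ j < m, a j ∈ O (e (j + 1))

/-- an alternating path ending at the vertex `a m`. -/
def VPath (E : ι → Finset V) (s : ι → ℕ) (O : ι → Finset V) (m : ℕ)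
    (e : ℕ → ι) (a : ℕ → V) : Prop :=
  EPath E s O m e a ∧ a m ∈ E (e m) ∧ a m ∉ O (e m)

lemma reach_path {E : ι → Finset V} {s : ι → ℕ} {O : ι → Finset V} [Nonempty V]
    (x : ι ⊕ V) (hx : Reach E s O x) :
    Sum.elim (fun i => ∃ m e a, EPath E s O m e a ∧ e m = i)
      (fun v => ∃ m e a, VPath E s O m e a ∧ a m = v) x := by
  induction hx with
  | base i hi =>
      refine ⟨0, fun _ => i, fun _ => Classical.arbitrary V, ?_, rfl⟩
      exact ⟨hi, fun j hj => absurd hj (by omega), fun j hj => absurd hj (by omega)⟩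
  | stepE u i hr hu IH =>
      obtain ⟨m, e, a, ⟨⟨h0, hmem, hlink⟩, hem, hom⟩, rfl⟩ := IH
      refine ⟨m + 1, fun j => if j ≤ m then e j else i, a, ⟨?_, ?_, ?_⟩, by simp⟩
      · simpa using h0
      · intro j hj
        have hjm : j ≤ m := by omega
        simp only [if_pos hjm]
        rcases Nat.lt_or_ge j m with h | h
        · exact hmem j h
        · have : j = m := by omega
          subst this; exact ⟨hem, hom⟩
      · intro j hj
        rcases Nat.lt_or_ge j m with h | h
        · have : j + 1 ≤ m := by omega
          simp only [if_pos this]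
          exact hlink j h
        · have hje : j = m := by omega
          subst hje
          simp only [if_neg (by omega : ¬ j + 1 ≤ j)]
          exact hu
  | stepV i v hr hv hnv IH =>
      obtain ⟨m, e, a, ⟨h0, hmem, hlink⟩, rfl⟩ := IH
      refine ⟨m, e, fun j => if j = m then v else a j, ⟨⟨h0, ?_, ?_⟩, ?_, ?_⟩, by simp⟩
      · intro j hj
        simp only [if_neg (by omega : ¬ j = m)]
        exact hmem j hj
      · intro j hj
        simp only [if_neg (by omega : ¬ j = m)]
        exact hlink j hj
      · simpa using hv
      · simpa using hnv


lemma shortcut_e {E : ι → Finset V} {s : ι → ℕ} {O : ι → Finset V} {m : ℕ}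
    {e : ℕ → ι} {a : ℕ → V} (hp : VPath E s O m e a) {j₁ j₂ : ℕ}
    (h12 : j₁ < j₂) (h2m : j₂ ≤ m) (hee : e j₁ = e j₂) :
    ∃ e' a', VPath E s O (m - (j₂ - j₁)) e' a' ∧ a' (m - (j₂ - j₁)) = a m := by
  obtain ⟨⟨h0, hmem, hlink⟩, hem, hom⟩ := hp
  set d := j₂ - j₁ with hd
  have hkey : e (j₁ + d) = e j₁ := by
    rw [hee]; congr 1; omega
  refine ⟨fun j => if j < j₁ then e j else e (j + d),
          fun j => if j < j₁ then a j else a (j + d), ⟨⟨?_, ?_, ?_⟩, ?_, ?_⟩, ?_⟩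
  · dsimp only
    split_ifs with hc
    · exact h0
    · have hj0 : j₁ = 0 := by omega
      have h1 : (0 : ℕ) + d = j₂ := by omega
      rw [h1, ← hee, hj0]; exact h0
  · intro j hj
    dsimp only
    split_ifs with hc
    · exact hmem j (by omega)
    · exact hmem (j + d) (by omega)
  · intro j hj
    dsimp only
    by_cases hc : j < j₁
    · by_cases hc1 : j + 1 < j₁
      · rw [if_pos hc, if_pos hc1]
        exact hlink j (by omega)
      · have hj1 : j + 1 = j₁ := by omega
        rw [if_pos hc, if_neg hc1]
        have h1 : j + 1 + d = j₂ := by omega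
        rw [h1, ← hee, ← hj1]
        exact hlink j (by omega)
    · have hc1 : ¬ j + 1 < j₁ := by omega
      rw [if_neg hc, if_neg hc1]
      have h1 : j + 1 + d = j + d + 1 := by omega
      rw [h1]
      exact hlink (j + d) (by omega)
  · dsimp only
    have hc : ¬ m - d < j₁ := by omega
    rw [if_neg hc, if_neg hc]
    have h1 : m - d + d = m := by omega
    rw [h1]; exact hem
  · dsimp only
    have hc : ¬ m - d < j₁ := by omega
    rw [if_neg hc, if_neg hc]
    have h1 : m - d + d = m := by omega
    rw [h1]; exact hom
  · dsimp only
    have hc : ¬ m - d < j₁ := by omega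
    rw [if_neg hc]
    congr 1; omega

lemma shortcut_a {E : ι → Finset V} {s : ι → ℕ} {O : ι → Finset V} {m : ℕ}
    {e : ℕ → ι} {a : ℕ → V} (hp : VPath E s O m e a) {j₁ j₂ : ℕ}
    (h12 : j₁ < j₂) (h2m : j₂ ≤ m) (haa : a j₁ = a j₂) :
    ∃ e' a', VPath E s O (m - (j₂ - j₁)) e' a' ∧ a' (m - (j₂ - j₁)) = a m := by
  obtain ⟨⟨h0, hmem, hlink⟩, hem, hom⟩ := hp
  set d := j₂ - j₁ with hd
  have hkey : a (j₁ + d) = a j₁ := by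
    rw [haa]; congr 1; omega
  refine ⟨fun j => if j ≤ j₁ then e j else e (j + d),
          fun j => if j < j₁ then a j else a (j + d), ⟨⟨?_, ?_, ?_⟩, ?_, ?_⟩, ?_⟩
  · dsimp only
    rw [if_pos (by omega : (0:ℕ) ≤ j₁)]
    exact h0
  · intro j hj
    dsimp only
    by_cases hc : j < j₁
    · rw [if_pos hc, if_pos (by omega : j ≤ j₁)]
      exact hmem j (by omega)
    · by_cases hc2 : j ≤ j₁
      · have hjj : j = j₁ := by omega
        rw [if_neg hc, if_pos hc2, hjj, hkey]
        exact hmem j₁ (by omega)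
      · rw [if_neg hc, if_neg hc2]
        exact hmem (j + d) (by omega)
  · intro j hj
    dsimp only
    by_cases hc : j < j₁
    · rw [if_pos hc, if_pos (by omega : j + 1 ≤ j₁)]
      exact hlink j (by omega)
    · have hc2 : ¬ j + 1 ≤ j₁ := by omega
      rw [if_neg hc, if_neg hc2]
      have h1 : j + 1 + d = j + d + 1 := by omega
      rw [h1]
      exact hlink (j + d) (by omega)
  · dsimp only
    have hc : ¬ m - d < j₁ := by omega
    by_cases hc2 : m - d ≤ j₁
    · have hjj : m - d = j₁ := by omega
      rw [if_neg hc, if_pos hc2, hjj, hkey]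
      exact (hmem j₁ (by omega)).1
    · rw [if_neg hc, if_neg hc2]
      have h1 : m - d + d = m := by omega
      rw [h1]; exact hem
  · dsimp only
    have hc : ¬ m - d < j₁ := by omega
    by_cases hc2 : m - d ≤ j₁
    · have hjj : m - d = j₁ := by omega
      rw [if_neg hc, if_pos hc2, hjj, hkey]
      exact (hmem j₁ (by omega)).2
    · rw [if_neg hc, if_neg hc2]
      have h1 : m - d + d = m := by omega
      rw [h1]; exact hom
  · dsimp only
    have hc : ¬ m - d < j₁ := by omega
    rw [if_neg hc]
    congr 1; omega


lemma exists_simple_path {k : ℕ} {E : ι → Finset V} {s : ι → ℕ} {O : ι → Finset V}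
    (hex : ∃ m e a, VPath E s O m e a ∧ deg O (a m) < k) :
    ∃ m e a, VPath E s O m e a ∧ deg O (a m) < k ∧
      Set.InjOn e (Set.Iic m) ∧ Set.InjOn a (Set.Iic m) := by
  have hex' : ∃ m : ℕ, ∃ e a, VPath E s O m e a ∧ deg O (a m) < k := hex
  classical
  set m := Nat.find hex' with hm
  obtain ⟨e, a, hp, hdeg⟩ := Nat.find_spec hex'
  refine ⟨m, e, a, hp, hdeg, ?_, ?_⟩
  · intro x hx y hy hxy
    have hx' : x ≤ m := hx
    have hy' : y ≤ m := hy
    by_contra hne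
    rcases Nat.lt_or_ge x y with hlt | hge
    · obtain ⟨e', a', hp', ha'⟩ := shortcut_e hp hlt hy hxy
      have := Nat.find_min hex' (m := m - (y - x)) (by omega)
      exact this ⟨e', a', hp', by rw [ha']; exact hdeg⟩
    · have hlt : y < x := by omega
      obtain ⟨e', a', hp', ha'⟩ := shortcut_e hp hlt hx hxy.symm
      have := Nat.find_min hex' (m := m - (x - y)) (by omega)
      exact this ⟨e', a', hp', by rw [ha']; exact hdeg⟩
  · intro x hx y hy hxy
    have hx' : x ≤ m := hx
    have hy' : y ≤ m := hy
    by_contra hne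
    rcases Nat.lt_or_ge x y with hlt | hge
    · obtain ⟨e', a', hp', ha'⟩ := shortcut_a hp hlt hy hxy
      have := Nat.find_min hex' (m := m - (y - x)) (by omega)
      exact this ⟨e', a', hp', by rw [ha']; exact hdeg⟩
    · have hlt : y < x := by omega
      obtain ⟨e', a', hp', ha'⟩ := shortcut_a hp hlt hx hxy.symm
      have := Nat.find_min hex' (m := m - (x - y)) (by omega)
      exact this ⟨e', a', hp', by rw [ha']; exact hdeg⟩


lemma augment {k : ℕ} {E : ι → Finset V} {s : ι → ℕ} {O : ι → Finset V}
    (hval : Valid k E s O) {m : ℕ} {e : ℕ → ι} {a : ℕ → V}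
    (hp : VPath E s O m e a) (hdeg : deg O (a m) < k)
    (hei : Set.InjOn e (Set.Iic m)) (hai : Set.InjOn a (Set.Iic m)) :
    ∃ O' : ι → Finset V, Valid k E s O' ∧ ∑ i, (O' i).card = (∑ i, (O i).card) + 1 := by
  classical
  obtain ⟨⟨h0, hmem', hlink⟩, hem, hom⟩ := hp
  have hmem : ∀ j ≤ m, a j ∈ E (e j) ∧ a j ∉ O (e j) := by
    intro j hj
    rcases Nat.lt_or_ge j m with h | h
    · exact hmem' j h
    · have : j = m := by omega
      subst this; exact ⟨hem, hom⟩
  have heinj : ∀ x y, x ≤ m → y ≤ m → e x = e y → x = y := fun x y hx hy hxy => hei hx hy hxy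
  have hainj : ∀ x y, x ≤ m → y ≤ m → a x = a y → x = y := fun x y hx hy hxy => hai hx hy hxy
  set O' : ι → Finset V := fun i =>
    if H : ∃ j, j ≤ m ∧ e j = i then
      (if Nat.find H = 0 then insert (a 0) (O i)
       else insert (a (Nat.find H)) ((O i).erase (a (Nat.find H - 1))))
    else O i with hO'
  have O'_spec : ∀ j, j ≤ m → O' (e j) =
      (if j = 0 then insert (a 0) (O (e 0))
       else insert (a j) ((O (e j)).erase (a (j - 1)))) := by
    intro j hj
    have H : ∃ j', j' ≤ m ∧ e j' = e j := ⟨j, hj, rfl⟩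
    have hfind := Nat.find_spec H
    have hfj : Nat.find H = j := heinj _ _ hfind.1 hj hfind.2
    rw [hO']
    simp only [dif_pos H, hfj]
    by_cases hz : j = 0
    · subst hz; simp
    · rw [if_neg hz, if_neg hz]
  have O'_eq : ∀ i, (¬ ∃ j, j ≤ m ∧ e j = i) → O' i = O i := by
    intro i hi; rw [hO']; exact dif_neg hi
  -- membership characterisation
  have mem_O' : ∀ l, l ≤ m → ∀ x : V,
      (x ∈ O' (e l) ↔ (x = a l ∨ (x ∈ O (e l) ∧ (l = 0 ∨ x ≠ a (l - 1))))) := by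
    intro l hl x
    rw [O'_spec l hl]
    by_cases hz : l = 0
    · subst hz
      rw [if_pos rfl]
      simp only [Finset.mem_insert]
      constructor
      · rintro (h | h)
        · exact Or.inl h
        · exact Or.inr ⟨h, Or.inl (by trivial)⟩
      · rintro (h | ⟨h, -⟩)
        · exact Or.inl h
        · exact Or.inr h
    · rw [if_neg hz]
      simp only [Finset.mem_insert, Finset.mem_erase]
      constructor
      · rintro (h | ⟨h1, h2⟩)
        · exact Or.inl h
        · exact Or.inr ⟨h2, Or.inr h1⟩
      · rintro (h | ⟨h1, (h2 | h2)⟩)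
        · exact Or.inl h
        · exact absurd h2 hz
        · exact Or.inr ⟨h2, h1⟩
  -- cards
  have card0 : (O' (e 0)).card = (O (e 0)).card + 1 := by
    rw [O'_spec 0 (by omega), if_pos rfl,
      Finset.card_insert_of_notMem (hmem 0 (by omega)).2]
  have cardl : ∀ l, 1 ≤ l → l ≤ m → (O' (e l)).card = (O (e l)).card := by
    intro l h1 hl
    rw [O'_spec l hl, if_neg (by omega : ¬ l = 0)]
    have hin : a (l - 1) ∈ O (e l) := by
      have := hlink (l - 1) (by omega)
      have h2 : l - 1 + 1 = l := by omega
      rwa [h2] at this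
    have hout : a l ∉ O (e l) := (hmem l hl).2
    have hne : a l ≠ a (l - 1) := by
      intro hEq
      have := hainj l (l - 1) hl (by omega) hEq
      omega
    rw [Finset.card_insert_of_notMem (by
      simp only [Finset.mem_erase]
      tauto), Finset.card_erase_of_mem hin]
    have : 0 < (O (e l)).card := Finset.card_pos.2 ⟨_, hin⟩
    omega
  have cardne : ∀ i, i ≠ e 0 → (O' i).card = (O i).card := by
    intro i hi
    by_cases H : ∃ j, j ≤ m ∧ e j = i
    · obtain ⟨l, hl, rfl⟩ := H
      have hl1 : 1 ≤ l := by
        rcases Nat.eq_zero_or_pos l with h | h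
        · subst h; exact absurd rfl hi
        · omega
      exact cardl l hl1 hl
    · rw [O'_eq i H]
  refine ⟨O', ⟨?_, ?_, ?_⟩, ?_⟩
  · -- subset
    intro i x hx
    by_cases H : ∃ j, j ≤ m ∧ e j = i
    · obtain ⟨l, hl, rfl⟩ := H
      rw [mem_O' l hl] at hx
      rcases hx with h | ⟨h, _⟩
      · rw [h]; exact (hmem l hl).1
      · exact hval.1 _ h
    · rw [O'_eq i H] at hx
      exact hval.1 _ hx
  · -- cards
    intro i
    by_cases hi : i = e 0
    · subst hi
      rw [card0]
      exact h0
    · rw [cardne i hi]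
      exact hval.2.1 i
  · -- degrees
    intro x
    by_cases hx : ∃ j, j ≤ m ∧ a j = x
    · obtain ⟨j, hj, rfl⟩ := hx
      by_cases hjm : j = m
      · have hdeg' : deg O (a j) < k := by rw [hjm]; exact hdeg
        have hom' : a j ∉ O (e j) := by rw [hjm]; exact hom
        have hset : (Finset.univ.filter fun i => a j ∈ O' i) =
            insert (e j) (Finset.univ.filter fun i => a j ∈ O i) := by
          ext i
          simp only [Finset.mem_filter, Finset.mem_univ, true_and, Finset.mem_insert]
          by_cases H : ∃ l, l ≤ m ∧ e l = i
          · obtain ⟨l, hl, rfl⟩ := H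
            rw [mem_O' l hl]
            have h4 : l = 0 ∨ a j ≠ a (l - 1) := by
              by_cases hz : l = 0
              · exact Or.inl hz
              · refine Or.inr fun hEq => ?_
                have := hainj j (l - 1) (by omega) (by omega) hEq
                omega
            constructor
            · rintro (h | ⟨h, -⟩)
              · have : j = l := hainj j l (by omega) hl h
                exact Or.inl (by rw [this])
              · exact Or.inr h
            · rintro (h | h)
              · have : l = j := heinj l j hl (by omega) h
                exact Or.inl (by rw [this])
              · exact Or.inr ⟨h, h4⟩
          · rw [O'_eq i H]
            have : i ≠ e j := fun h => H ⟨j, by omega, h.symm⟩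
            tauto
        rw [deg, hset, Finset.card_insert_of_notMem (by
          simp only [Finset.mem_filter, Finset.mem_univ, true_and]
          exact hom')]
        exact hdeg'
      · have hjm' : j < m := by omega
        have hset : (Finset.univ.filter fun i => a j ∈ O' i) =
            insert (e j) ((Finset.univ.filter fun i => a j ∈ O i).erase (e (j + 1))) := by
          ext i
          simp only [Finset.mem_filter, Finset.mem_univ, true_and, Finset.mem_insert,
            Finset.mem_erase]
          by_cases H : ∃ l, l ≤ m ∧ e l = i
          · obtain ⟨l, hl, rfl⟩ := H
            rw [mem_O' l hl]
            constructor
            · rintro (h | ⟨h, h'⟩)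
              · have : j = l := hainj j l (by omega) hl h
                exact Or.inl (by rw [this])
              · refine Or.inr ⟨fun hEq => ?_, h⟩
                have hlj : l = j + 1 := heinj l (j + 1) hl (by omega) hEq
                rcases h' with hz | hne
                · omega
                · exact hne (by rw [show l - 1 = j by omega])
            · rintro (h | ⟨h, h'⟩)
              · have : l = j := heinj l j hl (by omega) h
                exact Or.inl (by rw [this])
              · refine Or.inr ⟨h', ?_⟩
                by_cases hz : l = 0
                · exact Or.inl hz
                · refine Or.inr fun hEq => ?_
                  have hj1 : j = l - 1 := hainj j (l - 1) (by omega) (by omega) hEq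
                  exact h (by rw [show l = j + 1 by omega])
          · rw [O'_eq i H]
            have hne1 : i ≠ e j := fun h => H ⟨j, by omega, h.symm⟩
            have hne2 : i ≠ e (j + 1) := fun h => H ⟨j + 1, by omega, h.symm⟩
            tauto
        have hejmem : e (j + 1) ∈ Finset.univ.filter fun i => a j ∈ O i := by
          simp only [Finset.mem_filter, Finset.mem_univ, true_and]
          exact hlink j hjm'
        have hejnot : e j ∉ (Finset.univ.filter fun i => a j ∈ O i).erase (e (j + 1)) := by
          simp only [Finset.mem_erase, Finset.mem_filter, Finset.mem_univ, true_and]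
          rintro ⟨-, h⟩
          exact (hmem j hj).2 h
        rw [deg, hset, Finset.card_insert_of_notMem hejnot,
          Finset.card_erase_of_mem hejmem]
        have hpos : 0 < (Finset.univ.filter fun i => a j ∈ O i).card :=
          Finset.card_pos.2 ⟨_, hejmem⟩
        have := hval.2.2 (a j)
        rw [deg] at this
        omega
    · -- x not on the path: degree unchanged
      have hset : (Finset.univ.filter fun i => x ∈ O' i) =
          (Finset.univ.filter fun i => x ∈ O i) := by
        ext i
        simp only [Finset.mem_filter, Finset.mem_univ, true_and]
        by_cases H : ∃ l, l ≤ m ∧ e l = i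
        · obtain ⟨l, hl, rfl⟩ := H
          rw [mem_O' l hl]
          have h1 : x ≠ a l := fun h => hx ⟨l, hl, h.symm⟩
          have h4 : l = 0 ∨ x ≠ a (l - 1) := by
            by_cases hz : l = 0
            · exact Or.inl hz
            · exact Or.inr fun h => hx ⟨l - 1, by omega, h.symm⟩
          tauto
        · rw [O'_eq i H]
      rw [deg, hset]
      exact hval.2.2 x
  · -- total size increased by one
    have he0 : (e 0) ∈ (Finset.univ : Finset ι) := Finset.mem_univ _
    rw [← Finset.add_sum_erase _ _ he0, ← Finset.add_sum_erase _ _ he0, card0]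
    have : ∑ i ∈ Finset.univ.erase (e 0), (O' i).card
        = ∑ i ∈ Finset.univ.erase (e 0), (O i).card := by
      refine Finset.sum_congr rfl fun i hi => ?_
      exact cardne i (Finset.mem_erase.1 hi).1
    rw [this]
    omega


lemma reach_full {k : ℕ} {E : ι → Finset V} {s : ι → ℕ} {O : ι → Finset V}
    (hval : Valid k E s O)
    (hmax : ∀ O', Valid k E s O' → ∑ i, (O' i).card ≤ ∑ i, (O i).card)
    {v : V} (hr : Reach E s O (Sum.inr v)) : deg O v = k := by
  refine le_antisymm (hval.2.2 v) ?_
  by_contra hlt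
  have hdeg : deg O v < k := by omega
  haveI : Nonempty V := ⟨v⟩
  have hpath := reach_path (E := E) (s := s) (O := O) (Sum.inr v) hr
  simp only [Sum.elim_inr] at hpath
  obtain ⟨m, e, a, hp, ham⟩ := hpath
  obtain ⟨m', e', a', hp', hdeg', hei, hai⟩ :=
    exists_simple_path ⟨m, e, a, hp, by rw [ham]; exact hdeg⟩
  obtain ⟨O', hval', hsum⟩ := augment hval hp' hdeg' hei hai
  have := hmax O' hval'
  omega

end Stmt9

/-- Generalised Hakimi theorem.  Let `H` be a multihypergraph (hyperedges indexed by `ι`,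
given as finsets `E i` of vertices) all of whose hyperedge sizes lie between `h−w+1` and
`h`.  A `(w,k)`-orientation assigns to each hyperedge of size `h−j` exactly `w−j` of its
vertices (equivalently `|O i| + h = w + |E i|`), with every vertex receiving at most `k`
positive signs.  Such an orientation exists iff for every `S ⊆ V`,
`d(H_S) − (h−w)·e(H_S) ≤ k|S|`, where `H_S` is the subhypergraph `w`-induced by `S`. -/
theorem stmt9 {V ι : Type*} [Fintype V] [DecidableEq V] [Fintype ι]
    (h w k : ℕ) (hw : 0 < w) (hwh : w < h) (hk : 0 < k)
    (E : ι → Finset V)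
    (hsize : ∀ i, h - w + 1 ≤ (E i).card ∧ (E i).card ≤ h) :
    (∃ O : ι → Finset V,
        (∀ i, O i ⊆ E i) ∧
        (∀ i, (O i).card + h = w + (E i).card) ∧
        (∀ v : V, (Finset.univ.filter fun i => v ∈ O i).card ≤ k)) ↔
      ∀ S : Finset V,
        (∑ i ∈ Finset.univ.filter (fun i : ι => h - w + 1 ≤ (E i ∩ S).card),
            ((E i ∩ S).card : ℤ)) -
          ((h : ℤ) - w) *
            (Finset.univ.filter (fun i : ι => h - w + 1 ≤ (E i ∩ S).card)).card ≤
        (k : ℤ) * S.card := by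
  classical
  open Finset Stmt9 in
  constructor
  · rintro ⟨O, hsub, hcard, hdegk⟩ S
    set F := Finset.univ.filter (fun i : ι => h - w + 1 ≤ (E i ∩ S).card) with hF
    have key : ∀ i ∈ F, ((E i ∩ S).card : ℤ) - ((h : ℤ) - w) ≤ ((O i ∩ S).card : ℤ) := by
      intro i _
      have h1 : (O i ∩ S).card + (O i \ S).card = (O i).card :=
        Finset.card_inter_add_card_sdiff _ _
      have h2 : (O i \ S).card ≤ (E i \ S).card :=
        Finset.card_le_card (Finset.sdiff_subset_sdiff (hsub i) (Finset.Subset.refl S))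
      have h3 : (E i ∩ S).card + (E i \ S).card = (E i).card :=
        Finset.card_inter_add_card_sdiff _ _
      have h4 := hcard i
      omega
    have step1 : ∑ i ∈ F, (((E i ∩ S).card : ℤ) - ((h : ℤ) - w)) ≤
        ∑ i ∈ F, ((O i ∩ S).card : ℤ) := Finset.sum_le_sum key
    have step2 : ∑ i ∈ F, ((O i ∩ S).card : ℤ) ≤ ∑ i, ((O i ∩ S).card : ℤ) :=
      Finset.sum_le_sum_of_subset_of_nonneg (Finset.subset_univ F)
        (fun i _ _ => Int.natCast_nonneg _)
    have step3 : ∑ i, ((O i ∩ S).card : ℤ) = ((∑ i, (O i ∩ S).card : ℕ) : ℤ) := by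
      push_cast; rfl
    have step4 : ∑ i, (O i ∩ S).card = ∑ v ∈ S, deg O v := sum_inter_card O S
    have step5 : ∑ v ∈ S, deg O v ≤ k * S.card := by
      calc ∑ v ∈ S, deg O v ≤ ∑ _v ∈ S, k := Finset.sum_le_sum fun v _ => hdegk v
        _ = k * S.card := by rw [Finset.sum_const, smul_eq_mul, mul_comm]
    have step5' : ((∑ v ∈ S, deg O v : ℕ) : ℤ) ≤ (k : ℤ) * S.card := by
      exact_mod_cast step5
    have hsplit : ∑ i ∈ F, (((E i ∩ S).card : ℤ) - ((h : ℤ) - w)) =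
        (∑ i ∈ F, ((E i ∩ S).card : ℤ)) - ((h : ℤ) - w) * F.card := by
      rw [Finset.sum_sub_distrib, Finset.sum_const, nsmul_eq_mul]; ring
    rw [step4] at step3
    linarith
  · intro hcond
    set s : ι → ℕ := fun i => (E i).card + w - h with hs
    have hne : (Finset.univ.filter fun O : ι → Finset V => Valid k E s O).Nonempty := by
      refine ⟨fun _ => ∅, Finset.mem_filter.2 ⟨Finset.mem_univ _, ?_, ?_, ?_⟩⟩
      · intro i; exact Finset.empty_subset _
      · intro i; simp
      · intro v; simp [deg]
    obtain ⟨O, hOmem, hOmax⟩ := Finset.exists_max_image _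
      (fun O : ι → Finset V => ∑ i, (O i).card) hne
    have hval : Valid k E s O := (Finset.mem_filter.1 hOmem).2
    have hmax : ∀ O', Valid k E s O' → ∑ i, (O' i).card ≤ ∑ i, (O i).card :=
      fun O' hv => hOmax O' (Finset.mem_filter.2 ⟨Finset.mem_univ _, hv⟩)
    by_cases hdef : ∀ i, (O i).card = s i
    · refine ⟨O, hval.1, ?_, fun v => hval.2.2 v⟩
      intro i
      have h1 := hdef i
      have h2 := (hsize i).1
      simp only [hs] at h1
      omega
    · push_neg at hdef
      obtain ⟨i₀, hi₀⟩ := hdef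
      have hi₀lt : (O i₀).card < s i₀ := lt_of_le_of_ne (hval.2.1 i₀) hi₀
      exfalso
      set Scut := Finset.univ.filter fun v : V => Reach E s O (Sum.inr v) with hScut
      set R := Finset.univ.filter fun i : ι => Reach E s O (Sum.inl i) with hR
      set F := Finset.univ.filter (fun i : ι => h - w + 1 ≤ (E i ∩ Scut).card) with hF
      have hfull : ∀ v ∈ Scut, deg O v = k :=
        fun v hv => reach_full hval hmax ((Finset.mem_filter.1 hv).2)
      have hsubS : ∀ i, Reach E s O (Sum.inl i) → ∀ v ∈ E i, v ∉ O i → v ∈ Scut :=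
        fun i hri v hv hnv =>
          Finset.mem_filter.2 ⟨Finset.mem_univ _, Reach.stepV i v hri hv hnv⟩
      have hNineq : ∀ i, Reach E s O (Sum.inl i) →
          (E i).card - (O i).card + (O i ∩ Scut).card ≤ (E i ∩ Scut).card := by
        intro i hri
        have hsub1 : (E i \ O i) ∪ (O i ∩ Scut) ⊆ E i ∩ Scut := by
          intro x hx
          rcases Finset.mem_union.1 hx with hx | hx
          · obtain ⟨h1, h2⟩ := Finset.mem_sdiff.1 hx
            exact Finset.mem_inter.2 ⟨h1, hsubS i hri x h1 h2⟩
          · obtain ⟨h1, h2⟩ := Finset.mem_inter.1 hx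
            exact Finset.mem_inter.2 ⟨hval.1 i h1, h2⟩
        have hdisj : Disjoint (E i \ O i) (O i ∩ Scut) := by
          rw [Finset.disjoint_left]
          intro x hx1 hx2
          exact (Finset.mem_sdiff.1 hx1).2 (Finset.mem_inter.1 hx2).1
        have hcu := Finset.card_le_card hsub1
        rwa [Finset.card_union_of_disjoint hdisj, Finset.card_sdiff_of_subset (hval.1 i)] at hcu
      have hOE : ∀ i, (O i).card ≤ (E i).card := fun i => Finset.card_le_card (hval.1 i)
      have hRF : R ⊆ F := by
        intro i hi
        have hri : Reach E s O (Sum.inl i) := (Finset.mem_filter.1 hi).2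
        have hN := hNineq i hri
        refine Finset.mem_filter.2 ⟨Finset.mem_univ _, ?_⟩
        have h2 := (hsize i).1
        have h3 := hOE i
        cases hri with
        | base _ hlt =>
            simp only [hs] at hlt
            omega
        | stepE u _ hu humem =>
            have huS : u ∈ Scut := Finset.mem_filter.2 ⟨Finset.mem_univ _, hu⟩
            have hpos : 0 < (O i ∩ Scut).card :=
              Finset.card_pos.2 ⟨u, Finset.mem_inter.2 ⟨humem, huS⟩⟩
            have h5 := hval.2.1 i
            simp only [hs] at h5
            omega
      have hG3 : ∀ i, i ∉ R → (O i ∩ Scut).card = 0 := by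
        intro i hi
        rw [Finset.card_eq_zero]
        by_contra hne2
        obtain ⟨v, hv⟩ := Finset.nonempty_iff_ne_empty.2 hne2
        obtain ⟨hv1, hv2⟩ := Finset.mem_inter.1 hv
        have hrv : Reach E s O (Sum.inr v) := (Finset.mem_filter.1 hv2).2
        exact hi (Finset.mem_filter.2 ⟨Finset.mem_univ _, Reach.stepE v i hrv hv1⟩)
      have hi₀R : i₀ ∈ R :=
        Finset.mem_filter.2 ⟨Finset.mem_univ _, Reach.base i₀ hi₀lt⟩
      have hG1 : ∀ i ∈ R, ((s i : ℤ) - (O i).card) + ((O i ∩ Scut).card : ℤ) ≤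
          ((E i ∩ Scut).card : ℤ) - ((h : ℤ) - w) := by
        intro i hi
        have hri := (Finset.mem_filter.1 hi).2
        have hN := hNineq i hri
        have h2 := (hsize i).1
        have h3 := hOE i
        have h4 : (s i : ℤ) = ((E i).card : ℤ) + w - h := by
          simp only [hs]; omega
        omega
      have hsum1 : 1 + (k : ℤ) * Scut.card ≤
          ∑ i ∈ R, (((E i ∩ Scut).card : ℤ) - ((h : ℤ) - w)) := by
        have hA : ∑ i ∈ R, (((s i : ℤ) - (O i).card) + ((O i ∩ Scut).card : ℤ)) ≤
            ∑ i ∈ R, (((E i ∩ Scut).card : ℤ) - ((h : ℤ) - w)) := Finset.sum_le_sum hG1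
        have hB : (1 : ℤ) ≤ ∑ i ∈ R, ((s i : ℤ) - (O i).card) := by
          have hnn : ∀ i ∈ R, (0 : ℤ) ≤ (s i : ℤ) - (O i).card := by
            intro i _
            have := hval.2.1 i
            omega
          have hsingle := Finset.single_le_sum hnn hi₀R
          have h1 : (1 : ℤ) ≤ (s i₀ : ℤ) - (O i₀).card := by
            have := hi₀lt; omega
          linarith
        have hC : ∑ i ∈ R, ((O i ∩ Scut).card : ℤ) = (k : ℤ) * Scut.card := by
          have h1 : ∑ i ∈ R, ((O i ∩ Scut).card : ℤ) = ∑ i, ((O i ∩ Scut).card : ℤ) :=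
            Finset.sum_subset (Finset.subset_univ R)
              (fun i _ hi => by rw [hG3 i hi]; rfl)
          rw [h1]
          have h2 : ∑ i, ((O i ∩ Scut).card : ℤ) = ((∑ i, (O i ∩ Scut).card : ℕ) : ℤ) := by
            push_cast; rfl
          rw [h2, sum_inter_card]
          have h3 : ∑ v ∈ Scut, deg O v = k * Scut.card := by
            rw [Finset.sum_congr rfl (fun v hv => hfull v hv), Finset.sum_const,
              smul_eq_mul, mul_comm]
          rw [h3]; push_cast; ring
        rw [Finset.sum_add_distrib] at hA
        linarith
      have hsum2 : ∑ i ∈ R, (((E i ∩ Scut).card : ℤ) - ((h : ℤ) - w)) ≤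
          ∑ i ∈ F, (((E i ∩ Scut).card : ℤ) - ((h : ℤ) - w)) := by
        refine Finset.sum_le_sum_of_subset_of_nonneg hRF ?_
        intro i hi _
        have hmem := (Finset.mem_filter.1 hi).2
        omega
      have hfinal := hcond Scut
      rw [← hF] at hfinal
      have hsplit : ∑ i ∈ F, (((E i ∩ Scut).card : ℤ) - ((h : ℤ) - w)) =
          (∑ i ∈ F, ((E i ∩ Scut).card : ℤ)) - ((h : ℤ) - w) * F.card := by
        rw [Finset.sum_sub_distrib, Finset.sum_const, nsmul_eq_mul]; ring
      linarith
end

section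
/- Let H be a multihypergraph with hyperedge sizes between h−w+1 and h, with m_{h−j} hyperedges of size h−j and n vertices. For S ⊆ V(H) define ∂*(S) = d(S) − Σ_{j=0}^{w−1} Σ_{i=w−j+1}^{h−j} (i − (w−j))·m_{h−j,i}(S), where d(S) is the degree sum of S and m_{h−j,i}(S) is the number of size-(h−j) hyperedges meeting S in exactly i vertices. Then the following are equivalent: (i) for every S ⊆ V(H), the w-density κ(H_S) of the subhypergraph w-induced by S is at most k; (ii) for every S ⊆ V(H), ∂*(S) ≥ k|S| + Σ_{j=0}^{w−1}(w−j)m_{h−j} − kn. -/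
open scoped Classical

private lemma key_pt (h w c a t : ℕ) (hwh : w < h)
    (hc1 : h - w + 1 ≤ c) (hc2 : c ≤ h) (hat : a + t = c) :
    (a : ℤ) - (if (w : ℤ) + c - h + 1 ≤ (a : ℤ) then (a : ℤ) - ((w : ℤ) + c - h) else 0)
    = ((w : ℤ) + c - h) - (if h - w + 1 ≤ t then (t : ℤ) - ((h : ℤ) - w) else 0) := by
  split_ifs <;> omega

private lemma keysum {V ι : Type*} [Fintype V] [DecidableEq V] [Fintype ι]
    (h w : ℕ) (hwh : w < h) (E : ι → Finset V)
    (hsize : ∀ i, h - w + 1 ≤ (E i).card ∧ (E i).card ≤ h) (S : Finset V) :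
    (∑ i : ι, ((E i ∩ S).card : ℤ)) -
      (∑ i : ι, (if (w : ℤ) + (E i).card - h + 1 ≤ ((E i ∩ S).card : ℤ) then
          ((E i ∩ S).card : ℤ) - ((w : ℤ) + (E i).card - h) else 0))
    = (∑ i : ι, ((w : ℤ) + (E i).card - h)) -
      ∑ i : ι, (if h - w + 1 ≤ (E i ∩ Sᶜ).card then
          ((E i ∩ Sᶜ).card : ℤ) - ((h : ℤ) - w) else 0) := by
  rw [← Finset.sum_sub_distrib, ← Finset.sum_sub_distrib]
  refine Finset.sum_congr rfl fun i _ => ?_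
  have hat : (E i ∩ S).card + (E i ∩ Sᶜ).card = (E i).card := by
    have he : E i ∩ Sᶜ = E i \ S := by ext x; simp [and_comm]
    rw [he, Finset.card_inter_add_card_sdiff]
  exact key_pt h w (E i).card _ _ hwh (hsize i).1 (hsize i).2 hat

private lemma Bexpr {V ι : Type*} [Fintype V] [DecidableEq V] [Fintype ι]
    (h w : ℕ) (E : ι → Finset V) (S : Finset V) :
    (∑ i ∈ Finset.univ.filter (fun i : ι => h - w + 1 ≤ (E i ∩ S).card),
        ((E i ∩ S).card : ℤ)) -
      ((h : ℤ) - w) *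
        (Finset.univ.filter (fun i : ι => h - w + 1 ≤ (E i ∩ S).card)).card
    = ∑ i : ι, (if h - w + 1 ≤ (E i ∩ S).card then
        ((E i ∩ S).card : ℤ) - ((h : ℤ) - w) else 0) := by
  rw [Finset.sum_filter]
  have : ((Finset.univ.filter (fun i : ι => h - w + 1 ≤ (E i ∩ S).card)).card : ℤ)
      = ∑ i : ι, (if h - w + 1 ≤ (E i ∩ S).card then (1 : ℤ) else 0) := by
    rw [Finset.sum_boole]
  rw [this, Finset.mul_sum, ← Finset.sum_sub_distrib]
  refine Finset.sum_congr rfl fun i _ => ?_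
  split_ifs <;> ring

/-- Let `H` be a multihypergraph with hyperedge sizes between `h−w+1` and `h`.  For
`S ⊆ V` let `∂*(S) = d(S) − ∑_edges (|x∩S| − (w−j))⁺` (counting only edges of size `h−j`
with `|x∩S| ≥ w−j+1`, where `w−j = w + |x| − h`).  Then the following are equivalent:
(i) for every `S`, the `w`-density of the subhypergraph `w`-induced by `S` is at most `k`,
i.e. `d(H_S) − (h−w)·e(H_S) ≤ k|S|`; (ii) for every `S`,
`∂*(S) ≥ k|S| + ∑_j (w−j) m_{h−j} − k n`. -/
theorem stmt10 {V ι : Type*} [Fintype V] [DecidableEq V] [Fintype ι]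
    (h w k : ℕ) (hw : 0 < w) (hwh : w < h)
    (E : ι → Finset V)
    (hsize : ∀ i, h - w + 1 ≤ (E i).card ∧ (E i).card ≤ h) :
    ((∀ S : Finset V,
        (∑ i ∈ Finset.univ.filter (fun i : ι => h - w + 1 ≤ (E i ∩ S).card),
            ((E i ∩ S).card : ℤ)) -
          ((h : ℤ) - w) *
            (Finset.univ.filter (fun i : ι => h - w + 1 ≤ (E i ∩ S).card)).card ≤
        (k : ℤ) * S.card) ↔
      (∀ S : Finset V,
        (k : ℤ) * S.card + (∑ i : ι, ((w : ℤ) + (E i).card - h)) -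
            (k : ℤ) * (Fintype.card V) ≤
          (∑ i : ι, ((E i ∩ S).card : ℤ)) -
            ∑ i : ι,
              (if (w : ℤ) + (E i).card - h + 1 ≤ ((E i ∩ S).card : ℤ) then
                ((E i ∩ S).card : ℤ) - ((w : ℤ) + (E i).card - h)
              else 0))) := by
  constructor
  · intro H S
    have h1 := H Sᶜ
    rw [Bexpr] at h1
    rw [keysum h w hwh E hsize S]
    have hcard : (Sᶜ.card : ℤ) = (Fintype.card V : ℤ) - S.card := by
      rw [Finset.card_compl]
      have := S.card_le_univ
      push_cast [Nat.cast_sub (by simpa using this)]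
      ring
    rw [hcard] at h1
    linarith
  · intro H S
    have h1 := H Sᶜ
    rw [keysum h w hwh E hsize Sᶜ, compl_compl] at h1
    rw [Bexpr]
    have hcard : (Sᶜ.card : ℤ) = (Fintype.card V : ℤ) - S.card := by
      rw [Finset.card_compl]
      have := S.card_le_univ
      push_cast [Nat.cast_sub (by simpa using this)]
      ring
    rw [hcard] at h1
    linarith
end

section
/- Let H be a multihypergraph with hyperedge sizes between h−w+1 and h, n vertices, and m_{h−j} hyperedges of size h−j, with Σ_{j}(w−j)m_{h−j} ≤ kn. Suppose some S ⊆ V(H) satisfies ∂*(S) < k|S| + Σ_{j=0}^{w−1}(w−j)m_{h−j} − kn. Then the number of hyperedges x with |x ∩ (V∖S)| ≥ 2 is strictly greater than k·|V∖S|/w. -/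
open scoped Classical

/-- Let `H` be a multihypergraph with hyperedge sizes between `h−w+1` and `h` satisfying
`∑_j (w−j) m_{h−j} ≤ k n`.  If some `S ⊆ V` satisfies
`∂*(S) < k|S| + ∑_j (w−j) m_{h−j} − k n`, then the number of hyperedges partially
contained in `V∖S` (i.e. meeting `V∖S` in at least two vertices) is strictly greater
than `k·|V∖S|/w`. -/
theorem stmt11 {V ι : Type*} [Fintype V] [DecidableEq V] [Fintype ι]
    (h w k : ℕ) (hw : 0 < w) (hwh : w < h)
    (E : ι → Finset V)
    (hsize : ∀ i, h - w + 1 ≤ (E i).card ∧ (E i).card ≤ h)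
    (htotal : (∑ i : ι, ((w : ℤ) + (E i).card - h)) ≤ (k : ℤ) * (Fintype.card V))
    (S : Finset V)
    (hS : (∑ i : ι, ((E i ∩ S).card : ℤ)) -
        (∑ i : ι,
          (if (w : ℤ) + (E i).card - h + 1 ≤ ((E i ∩ S).card : ℤ) then
            ((E i ∩ S).card : ℤ) - ((w : ℤ) + (E i).card - h)
          else 0)) <
      (k : ℤ) * S.card + (∑ i : ι, ((w : ℤ) + (E i).card - h)) -
        (k : ℤ) * (Fintype.card V)) :
    (k : ℤ) * (Sᶜ : Finset V).card <
      (w : ℤ) * (Finset.univ.filter (fun i : ι => 2 ≤ (E i ∩ Sᶜ).card)).card := by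
  have hcompl : ∀ i : ι, (E i ∩ S).card + (E i ∩ Sᶜ).card = (E i).card := by
    intro i
    rw [show E i ∩ Sᶜ = E i \ S by rw [Finset.sdiff_eq_inter_compl]]
    exact Finset.card_inter_add_card_sdiff (E i) S
  have key : ∀ i : ι,
      ((w : ℤ) + (E i).card - h) - ((E i ∩ S).card : ℤ) +
        (if (w : ℤ) + (E i).card - h + 1 ≤ ((E i ∩ S).card : ℤ) then
            ((E i ∩ S).card : ℤ) - ((w : ℤ) + (E i).card - h) else 0)
        ≤ (if 2 ≤ (E i ∩ Sᶜ).card then (w : ℤ) else 0) := by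
    intro i
    have h1 := hcompl i
    have h2 := (hsize i).1
    have h3 := (hsize i).2
    by_cases hc : 2 ≤ (E i ∩ Sᶜ).card <;> simp only [hc, if_pos, if_neg, if_true, if_false] <;>
      split <;> omega
  have hsum := Finset.sum_le_sum (fun i (_ : i ∈ Finset.univ) => key i)
  rw [Finset.sum_add_distrib, Finset.sum_sub_distrib] at hsum
  have hcount : (∑ i : ι, (if 2 ≤ (E i ∩ Sᶜ).card then (w : ℤ) else 0))
      = (w : ℤ) * (Finset.univ.filter (fun i : ι => 2 ≤ (E i ∩ Sᶜ).card)).card := by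
    rw [← Finset.sum_filter, Finset.sum_const, nsmul_eq_mul, mul_comm]
  have hcard : ((Sᶜ : Finset V).card : ℤ) = (Fintype.card V : ℤ) - S.card := by
    rw [Finset.card_compl, Nat.cast_sub (Finset.card_le_univ S)]
  rw [hcount] at hsum
  have hk : (k : ℤ) * (Sᶜ : Finset V).card
      = (k : ℤ) * (Fintype.card V) - (k : ℤ) * S.card := by rw [hcard]; ring
  linarith [hsum, hS]
end

section
/- Let H be a multihypergraph with hyperedge sizes between h−w+1 and h, n vertices, and m_{h−j} hyperedges of size h−j, with Σ_j (w−j)m_{h−j} ≤ kn. Suppose S ⊆ V(H) satisfies ∂*(S) < k|S| + Σ_{j=0}^{w−1}(w−j)m_{h−j} − kn. Then: (a) the number of hyperedges intersecting S is strictly less than k|S|; and (b) (h−w) times the number of hyperedges meeting S in at least 2 vertices is strictly greater than d(S) − k|S|, where d(S) is the degree sum of S. -/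
open scoped Classical

/-- Let `H` be a multihypergraph with hyperedge sizes between `h−w+1` and `h` satisfying
`∑_j (w−j) m_{h−j} ≤ k n`.  If some `S ⊆ V` satisfies
`∂*(S) < k|S| + ∑_j (w−j) m_{h−j} − k n`, then (a) the number `ν(S)` of hyperedges
intersecting `S` is strictly less than `k|S|`, and (b) `(h−w)·ρ(S) > d(S) − k|S|`,
where `ρ(S)` is the number of hyperedges meeting `S` in at least two vertices and
`d(S)` the degree sum of `S`. -/
theorem stmt12 {V ι : Type*} [Fintype V] [DecidableEq V] [Fintype ι]
    (h w k : ℕ) (hw : 0 < w) (hwh : w < h)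
    (E : ι → Finset V)
    (hsize : ∀ i, h - w + 1 ≤ (E i).card ∧ (E i).card ≤ h)
    (htotal : (∑ i : ι, ((w : ℤ) + (E i).card - h)) ≤ (k : ℤ) * (Fintype.card V))
    (S : Finset V)
    (hS : (∑ i : ι, ((E i ∩ S).card : ℤ)) -
        (∑ i : ι,
          (if (w : ℤ) + (E i).card - h + 1 ≤ ((E i ∩ S).card : ℤ) then
            ((E i ∩ S).card : ℤ) - ((w : ℤ) + (E i).card - h)
          else 0)) <
      (k : ℤ) * S.card + (∑ i : ι, ((w : ℤ) + (E i).card - h)) -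
        (k : ℤ) * (Fintype.card V)) :
    ((Finset.univ.filter (fun i : ι => 1 ≤ (E i ∩ S).card)).card : ℤ) < (k : ℤ) * S.card ∧
    (∑ i : ι, ((E i ∩ S).card : ℤ)) - (k : ℤ) * S.card <
      ((h : ℤ) - w) * (Finset.univ.filter (fun i : ι => 2 ≤ (E i ∩ S).card)).card := by
  set a : ι → ℤ := fun i => ((E i ∩ S).card : ℤ) with ha
  set c : ι → ℤ := fun i => (w : ℤ) + (E i).card - h with hc
  set t : ι → ℤ := fun i => if c i + 1 ≤ a i then a i - c i else 0 with ht
  have hc1 : ∀ i, 1 ≤ c i := by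
    intro i
    have h1 := (hsize i).1
    have : ((h - w : ℕ) : ℤ) + 1 ≤ (E i).card := by exact_mod_cast h1
    have hwle : (w : ℤ) ≤ h := by exact_mod_cast hwh.le
    rw [Nat.cast_sub hwh.le] at this
    simp only [hc]; linarith
  have hac : ∀ i, a i ≤ c i + ((h : ℤ) - w) := by
    intro i
    have h1 : (E i ∩ S).card ≤ (E i).card := Finset.card_le_card (Finset.inter_subset_left)
    have : a i ≤ ((E i).card : ℤ) := by simp only [ha]; exact_mod_cast h1
    simp only [hc]; linarith
  have ha0 : ∀ i, 0 ≤ a i := fun i => by positivity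
  -- (a)
  have hν : ((Finset.univ.filter (fun i : ι => 1 ≤ (E i ∩ S).card)).card : ℤ)
      ≤ ∑ i : ι, (a i - t i) := by
    rw [Finset.card_filter]
    push_cast
    apply Finset.sum_le_sum
    intro i _
    by_cases h1 : 1 ≤ (E i ∩ S).card
    · have h1' : (1 : ℤ) ≤ a i := by show (1:ℤ) ≤ ((E i ∩ S).card : ℤ); exact_mod_cast h1
      simp only [if_pos h1, ht]
      split_ifs with h2
      · have := hc1 i; linarith
      · linarith
    · have h1' : a i = 0 := by
        have : (E i ∩ S).card = 0 := by omega
        simp [ha, this]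
      simp only [if_neg h1, ht, h1']
      have := hc1 i
      rw [if_neg (by linarith)]; norm_num
  have hρ : ∑ i : ι, t i
      ≤ ((h : ℤ) - w) * (Finset.univ.filter (fun i : ι => 2 ≤ (E i ∩ S).card)).card := by
    rw [Finset.card_filter]
    push_cast
    rw [Finset.mul_sum]
    apply Finset.sum_le_sum
    intro i _
    by_cases h2 : 2 ≤ (E i ∩ S).card
    · simp only [if_pos h2, mul_one, ht]
      have := hac i
      split_ifs with h3
      · linarith
      · linarith [hc1 i, hwh]
        done
    · have h2' : a i ≤ 1 := by
        have : (E i ∩ S).card ≤ 1 := by omega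
        simp only [ha]; exact_mod_cast this
      simp only [if_neg h2, mul_zero, ht]
      have := hc1 i
      rw [if_neg (by linarith)]
  have hsum : ∑ i : ι, (a i - t i) = (∑ i : ι, a i) - ∑ i : ι, t i := by
    rw [Finset.sum_sub_distrib]
  rw [hsum] at hν
  constructor
  · calc ((Finset.univ.filter (fun i : ι => 1 ≤ (E i ∩ S).card)).card : ℤ)
        ≤ (∑ i : ι, a i) - ∑ i : ι, t i := hν
      _ < (k : ℤ) * S.card + (∑ i : ι, c i) - (k : ℤ) * (Fintype.card V) := hS
      _ ≤ (k : ℤ) * S.card := by linarith [htotal]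
  · have := hS
    linarith [hρ, htotal]
end

section
/- Let H be a graph-like random pairing: D balls are partitioned into m₂ = D/2 pairs uniformly at random after being allocated into n bins with exactly q balls in a fixed bin-set S (each bin containing at least k+1 balls). If q < D/2, then the probability that at least t pairs have both balls in S is at most ((e·q)/(2t) · (q/D))^t. -/
open scoped Classical

namespace Stmt17

open Finset Equiv

def g (k : ℕ) : ℕ := ∏ i ∈ Finset.range k, (2*i+1)

lemma g_pos (k : ℕ) : 0 < g k := Finset.prod_pos (fun i _ => by omega)

lemma g_succ (k : ℕ) : g (k+1) = g k * (2*k+1) := Finset.prod_range_succ _ _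

variable {α : Type*} [Fintype α] [DecidableEq α]

/-- fixed-point-free involutions with support exactly `s`. -/
def FF (s : Finset α) : Finset (Equiv.Perm α) :=
  Finset.univ.filter fun π => (∀ x, π (π x) = x) ∧ ∀ x, π x ≠ x ↔ x ∈ s

lemma mem_FF {s : Finset α} {π : Equiv.Perm α} :
    π ∈ FF s ↔ (∀ x, π (π x) = x) ∧ ∀ x, π x ≠ x ↔ x ∈ s := by
  simp [FF]

lemma swap_mul_mem_FF_sdiff {s : Finset α} {a b : α} (ha : a ∈ s) (hb : b ∈ s) (hab : a ≠ b)
    {π : Equiv.Perm α} (hπ : π ∈ FF s) (hπa : π a = b) :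
    Equiv.swap a b * π ∈ FF (s \ {a, b}) := by
  obtain ⟨hinv, hff⟩ := mem_FF.mp hπ
  have hπb : π b = a := by rw [← hπa, hinv a]
  rw [mem_FF]
  constructor
  · intro x
    simp only [Equiv.Perm.mul_apply]
    rcases eq_or_ne (π x) a with h | hxa
    · have hx : x = b := by rw [← hinv x, h, hπa]
      rw [h, Equiv.swap_apply_left, hπb, Equiv.swap_apply_left]; exact hx.symm
    rcases eq_or_ne (π x) b with h | hxb
    · have hx : x = a := by rw [← hinv x, h, hπb]
      rw [h, Equiv.swap_apply_right, hπa, Equiv.swap_apply_right]; exact hx.symm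
    · rw [Equiv.swap_apply_of_ne_of_ne hxa hxb, hinv x,
        Equiv.swap_apply_of_ne_of_ne (fun h => hxb (by rw [h, hπa]))
          (fun h => hxa (by rw [h, hπb]))]
  · intro x
    simp only [Equiv.Perm.mul_apply, Finset.mem_sdiff, Finset.mem_insert, Finset.mem_singleton]
    rcases eq_or_ne x a with rfl | hxa
    · rw [hπa, Equiv.swap_apply_right]; simp
    rcases eq_or_ne x b with rfl | hxb
    · rw [hπb, Equiv.swap_apply_left]; simp
    · have h1 : π x ≠ a := fun h => hxb (by rw [← hinv x, h, hπa])
      have h2 : π x ≠ b := fun h => hxa (by rw [← hinv x, h, hπb])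
      rw [Equiv.swap_apply_of_ne_of_ne h1 h2, hff x]
      simp [hxa, hxb]

lemma swap_mul_mem_fiber {s : Finset α} {a b : α} (ha : a ∈ s) (hb : b ∈ s) (hab : a ≠ b)
    {σ : Equiv.Perm α} (hσ : σ ∈ FF (s \ {a, b})) :
    Equiv.swap a b * σ ∈ FF s ∧ (Equiv.swap a b * σ) a = b := by
  obtain ⟨hinv, hff⟩ := mem_FF.mp hσ
  have hmem : ∀ x, σ x ≠ x ↔ x ∈ s ∧ x ≠ a ∧ x ≠ b := by
    intro x
    rw [hff x]
    simp only [Finset.mem_sdiff, Finset.mem_insert, Finset.mem_singleton]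
    tauto
  have hσa : σ a = a := by
    by_contra h; exact (((hmem a).mp h).2.1) rfl
  have hσb : σ b = b := by
    by_contra h; exact (((hmem b).mp h).2.2) rfl
  have hρa : (Equiv.swap a b * σ) a = b := by
    simp [Equiv.Perm.mul_apply, hσa]
  refine ⟨?_, hρa⟩
  rw [mem_FF]
  constructor
  · intro x
    simp only [Equiv.Perm.mul_apply]
    rcases eq_or_ne x a with rfl | hxa
    · rw [hσa, Equiv.swap_apply_left, hσb, Equiv.swap_apply_right]
    rcases eq_or_ne x b with rfl | hxb
    · rw [hσb, Equiv.swap_apply_right, hσa, Equiv.swap_apply_left]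
    · have h1 : σ x ≠ a := fun h => hxa (by rw [← hinv x, h, hσa])
      have h2 : σ x ≠ b := fun h => hxb (by rw [← hinv x, h, hσb])
      rw [Equiv.swap_apply_of_ne_of_ne h1 h2, hinv x,
        Equiv.swap_apply_of_ne_of_ne hxa hxb]
  · intro x
    simp only [Equiv.Perm.mul_apply]
    rcases eq_or_ne x a with rfl | hxa
    · rw [hσa, Equiv.swap_apply_left]; exact iff_of_true (Ne.symm hab) ha
    rcases eq_or_ne x b with rfl | hxb
    · rw [hσb, Equiv.swap_apply_right]; exact iff_of_true hab hb
    · have h1 : σ x ≠ a := fun h => hxa (by rw [← hinv x, h, hσa])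
      have h2 : σ x ≠ b := fun h => hxb (by rw [← hinv x, h, hσb])
      rw [Equiv.swap_apply_of_ne_of_ne h1 h2, hmem x]
      simp [hxa, hxb]

lemma card_fiber (s : Finset α) {a b : α} (ha : a ∈ s) (hb : b ∈ s) (hab : a ≠ b) :
    ((FF s).filter fun π => π a = b).card = (FF (s \ {a, b})).card := by
  apply Finset.card_bij' (fun π _ => Equiv.swap a b * π) (fun σ _ => Equiv.swap a b * σ)
  · intro π hπ
    rw [Finset.mem_filter] at hπ
    exact swap_mul_mem_FF_sdiff ha hb hab hπ.1 hπ.2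
  · intro σ hσ
    rw [Finset.mem_filter]
    exact swap_mul_mem_fiber ha hb hab hσ
  · intro π _
    rw [← mul_assoc, Equiv.swap_mul_self, one_mul]
  · intro σ _
    rw [← mul_assoc, Equiv.swap_mul_self, one_mul]

lemma card_FF : ∀ (k : ℕ) (s : Finset α), s.card = 2*k → (FF s).card = g k := by
  intro k
  induction k with
  | zero =>
    intro s hs
    have hse : s = ∅ := Finset.card_eq_zero.mp (by omega)
    subst hse
    have h1 : FF (∅ : Finset α) = {1} := by
      ext π
      simp only [mem_FF, Finset.notMem_empty, iff_false, not_not, Finset.mem_singleton]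
      constructor
      · rintro ⟨h1, h2⟩; exact Equiv.ext h2
      · rintro rfl; simp
    rw [h1]; simp [g]
  | succ k ih =>
    intro s hs
    obtain ⟨a, ha⟩ := Finset.card_pos.mp (show 0 < s.card by omega)
    rw [Finset.card_eq_sum_card_fiberwise (f := fun π => π a) (t := s.erase a) ?_]
    · have hsum : ∀ b ∈ s.erase a, ((FF s).filter fun π => π a = b).card = g k := by
        intro b hb
        obtain ⟨hba, hbs⟩ := Finset.mem_erase.mp hb
        rw [card_fiber s ha hbs (Ne.symm hba)]
        apply ih
        rw [Finset.card_sdiff_of_subset (by intro x hx; simp at hx; rcases hx with rfl | rfl <;> assumption)]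
        rw [Finset.card_insert_of_notMem (by simp [Ne.symm hba]), Finset.card_singleton]
        omega
      rw [Finset.sum_congr rfl hsum, Finset.sum_const, Finset.card_erase_of_mem ha, hs,
        smul_eq_mul, g_succ, show 2*(k+1)-1 = 2*k+1 from by omega, mul_comm]
    · intro π hπ
      obtain ⟨hinv, hff⟩ := mem_FF.mp hπ
      have h1 : π a ≠ a := (hff a).mpr ha
      have h2 : π a ∈ s := (hff (π a)).mp (by rw [hinv a]; exact fun h => h1 h.symm)
      exact Finset.mem_erase.mpr ⟨h1, h2⟩

/-- support of a permutation as a filter -/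
def supp (μ : Equiv.Perm α) : Finset α := Finset.univ.filter fun x => μ x ≠ x

lemma mem_supp {μ : Equiv.Perm α} {x : α} : x ∈ supp μ ↔ μ x ≠ x := by simp [supp]

/-- fpf involutions of the whole type extending the partial involution `μ`. -/
def extend (μ : Equiv.Perm α) : Finset (Equiv.Perm α) :=
  Finset.univ.filter fun π => (∀ x, π (π x) = x) ∧ (∀ x, π x ≠ x) ∧
    ∀ x, μ x ≠ x → π x = μ x

lemma mem_extend {μ π : Equiv.Perm α} : π ∈ extend μ ↔
    (∀ x, π (π x) = x) ∧ (∀ x, π x ≠ x) ∧ ∀ x, μ x ≠ x → π x = μ x := by simp [extend]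

lemma card_extend {μ : Equiv.Perm α} (hμ : ∀ x, μ (μ x) = x) :
    (extend μ).card = (FF (supp μ)ᶜ).card := by
  have hμ1 : μ * μ = 1 := Equiv.ext fun x => hμ x
  have hμin : ∀ x, μ x ≠ x → μ (μ x) ≠ μ x := fun x h => by
    rw [hμ x]; exact fun e => h e.symm
  have sdef : ∀ x : α, x ∈ (supp μ)ᶜ ↔ μ x = x := by
    intro x; simp [supp]
  apply Finset.card_bij' (fun π _ => π * μ) (fun σ _ => σ * μ)
  · intro π hπ
    obtain ⟨hinv, hfpf, hext⟩ := mem_extend.mp hπ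
    rw [mem_FF]
    constructor
    · intro x
      simp only [Equiv.Perm.mul_apply]
      by_cases hx : μ x = x
      · rw [hx]
        by_cases hpx : μ (π x) = π x
        · rw [hpx, hinv x]
        · exfalso
          have h1 := hext (π x) hpx
          rw [hinv x] at h1
          have h2 : μ x = π x := by conv_lhs => rw [h1, hμ (π x)]
          exact hfpf x (by rw [← h2, hx])
      · have key : π (μ x) = x := by rw [hext (μ x) (hμin x hx), hμ x]
        rw [key]; exact key
    · intro x
      rw [sdef x]
      simp only [Equiv.Perm.mul_apply]
      by_cases hx : μ x = x
      · rw [hx]; exact iff_of_true (hfpf x) rfl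
      · have key : π (μ x) = x := by rw [hext (μ x) (hμin x hx), hμ x]
        rw [key]; simp [hx]
  · intro σ hσ
    obtain ⟨hinv, hff⟩ := mem_FF.mp hσ
    have hσ2 : ∀ x, σ x ≠ x ↔ μ x = x := fun x => by rw [hff x, sdef x]
    have hfixσ : ∀ x, μ x ≠ x → σ x = x := fun x h => by
      by_contra hc; exact h ((hσ2 x).mp hc)
    rw [mem_extend]
    refine ⟨?_, ?_, ?_⟩
    · intro x
      simp only [Equiv.Perm.mul_apply]
      by_cases hx : μ x = x
      · rw [hx]
        have hσx : σ x ≠ x := (hσ2 x).mpr hx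
        have h2 : μ (σ x) = σ x := (hσ2 (σ x)).mp (by rw [hinv x]; exact fun e => hσx e.symm)
        rw [h2, hinv x]
      · rw [hfixσ (μ x) (hμin x hx), hμ x]
        exact hfixσ x hx
    · intro x
      simp only [Equiv.Perm.mul_apply]
      by_cases hx : μ x = x
      · rw [hx]; exact (hσ2 x).mpr hx
      · rw [hfixσ (μ x) (hμin x hx)]; exact hx
    · intro x h
      simp only [Equiv.Perm.mul_apply]
      exact hfixσ (μ x) (hμin x h)
  · intro π _; rw [mul_assoc, hμ1, mul_one]
  · intro σ _; rw [mul_assoc, hμ1, mul_one]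

/-- restriction of an involution to an invariant set -/
def restr (π : Equiv.Perm α) (s : Finset α) (hinv : ∀ x, π (π x) = x)
    (hs : ∀ x ∈ s, π x ∈ s) : Equiv.Perm α :=
  Function.Involutive.toPerm (fun x => if x ∈ s then π x else x) (by
    intro x
    by_cases hx : x ∈ s
    · simp only [hx, if_pos, if_true]
      rw [if_pos (hs x hx), hinv x]
    · simp [hx])

lemma restr_apply (π : Equiv.Perm α) (s : Finset α) (hinv : ∀ x, π (π x) = x)
    (hs : ∀ x ∈ s, π x ∈ s) (x : α) :
    restr π s hinv hs x = if x ∈ s then π x else x := rfl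

noncomputable def phi (T : Finset α) (t : ℕ) (π : Equiv.Perm α) : Equiv.Perm α :=
  if h : (∀ x, π (π x) = x) ∧ ∃ s : Finset α, s ⊆ T ∧ s.card = 2*t ∧ ∀ x ∈ s, π x ∈ s
  then restr π h.2.choose h.1 h.2.choose_spec.2.2
  else 1

lemma phi_spec (T : Finset α) (t : ℕ) {π : Equiv.Perm α}
    (hinv : ∀ x, π (π x) = x) (hfpf : ∀ x, π x ≠ x)
    (hex : ∃ s : Finset α, s ⊆ T ∧ s.card = 2*t ∧ ∀ x ∈ s, π x ∈ s) :
    (∀ x, phi T t π (phi T t π x) = x) ∧ supp (phi T t π) ⊆ T ∧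
      (supp (phi T t π)).card = 2*t ∧ ∀ x, phi T t π x ≠ x → π x = phi T t π x := by
  have h : (∀ x, π (π x) = x) ∧ ∃ s : Finset α, s ⊆ T ∧ s.card = 2*t ∧ ∀ x ∈ s, π x ∈ s :=
    ⟨hinv, hex⟩
  have hφ : phi T t π = restr π h.2.choose h.1 h.2.choose_spec.2.2 := dif_pos h
  obtain ⟨hsT, hscard, hsinv⟩ := h.2.choose_spec
  set s := h.2.choose with hs
  have happ : ∀ x, phi T t π x = if x ∈ s then π x else x := by
    intro x; rw [hφ, restr_apply]
  have hsupp : supp (phi T t π) = s := by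
    ext x
    rw [mem_supp, happ x]
    by_cases hx : x ∈ s
    · simp [hx, hfpf x]
    · simp [hx]
  refine ⟨?_, ?_, ?_, ?_⟩
  · intro x
    rw [happ, happ]
    by_cases hx : x ∈ s
    · rw [if_pos hx, if_pos (hsinv x hx), hinv x]
    · rw [if_neg hx, if_neg hx]
  · rw [hsupp]; exact hsT
  · rw [hsupp]; exact hscard
  · intro x hx
    rw [happ] at hx ⊢
    by_cases h' : x ∈ s
    · rw [if_pos h']
    · exact absurd rfl (by rwa [if_neg h'] at hx)

lemma exists_invariant [LinearOrder α] {π : Equiv.Perm α}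
    (hinv : ∀ x, π (π x) = x) (hfpf : ∀ x, π x ≠ x)
    {T : Finset α} {t : ℕ}
    (h : 2*t ≤ (Finset.univ.filter fun i => i ∈ T ∧ π i ∈ T).card) :
    ∃ s : Finset α, s ⊆ T ∧ s.card = 2*t ∧ ∀ x ∈ s, π x ∈ s := by
  set A := Finset.univ.filter fun i => i ∈ T ∧ π i ∈ T with hA
  set P := Finset.univ.filter fun i => (i ∈ T ∧ π i ∈ T) ∧ i < π i with hP
  have hA_sub : A ⊆ P ∪ P.image π := by
    intro i hi
    rw [hA, Finset.mem_filter] at hi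
    rcases lt_or_gt_of_ne (Ne.symm (hfpf i)) with hlt | hgt
    · exact Finset.mem_union_left _
        (by rw [hP, Finset.mem_filter]; exact ⟨Finset.mem_univ _, hi.2, hlt⟩)
    · apply Finset.mem_union_right
      rw [Finset.mem_image]
      refine ⟨π i, ?_, hinv i⟩
      rw [hP, Finset.mem_filter]
      exact ⟨Finset.mem_univ _, ⟨hi.2.2, by rw [hinv i]; exact hi.2.1⟩,
        by rw [hinv i]; exact hgt⟩
  have hPt : t ≤ P.card := by
    have h1 : A.card ≤ (P ∪ P.image π).card := Finset.card_le_card hA_sub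
    have h2 : (P ∪ P.image π).card ≤ P.card + (P.image π).card := Finset.card_union_le _ _
    have h3 : (P.image π).card ≤ P.card := Finset.card_image_le
    omega
  obtain ⟨Q, hQP, hQcard⟩ := Finset.exists_subset_card_eq hPt
  have hQprop : ∀ x ∈ Q, (x ∈ T ∧ π x ∈ T) ∧ x < π x := by
    intro x hx
    have h' := hQP hx
    rw [hP, Finset.mem_filter] at h'
    exact h'.2
  refine ⟨Q ∪ Q.image π, ?_, ?_, ?_⟩
  · apply Finset.union_subset
    · exact fun x hx => (hQprop x hx).1.1
    · intro x hx
      rw [Finset.mem_image] at hx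
      obtain ⟨j, hj, rfl⟩ := hx
      exact (hQprop j hj).1.2
  · have hdisj : Disjoint Q (Q.image π) := by
      rw [Finset.disjoint_left]
      intro x hxQ hxI
      rw [Finset.mem_image] at hxI
      obtain ⟨j, hj, hjx⟩ := hxI
      have h1 : j < x := hjx ▸ (hQprop j hj).2
      have h2 : x < π x := (hQprop x hxQ).2
      have h3 : π x = j := by rw [← hjx, hinv j]
      exact absurd (h2.trans_eq h3) (asymm h1)
    rw [Finset.card_union_of_disjoint hdisj,
      Finset.card_image_of_injective Q π.injective, hQcard]
    omega
  · intro x hx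
    rcases Finset.mem_union.mp hx with hxQ | hxI
    · exact Finset.mem_union_right _ (Finset.mem_image_of_mem π hxQ)
    · rw [Finset.mem_image] at hxI
      obtain ⟨j, hj, rfl⟩ := hxI
      rw [hinv j]
      exact Finset.mem_union_left _ hj

lemma Ecard_le [LinearOrder α] (T : Finset α) (t : ℕ) (E M : Finset (Equiv.Perm α))
    (hEm : ∀ π : Equiv.Perm α, π ∈ E ↔ (∀ x, π (π x) = x) ∧ (∀ x, π x ≠ x) ∧
      2*t ≤ (Finset.univ.filter fun i => i ∈ T ∧ π i ∈ T).card)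
    (hMm : ∀ μ : Equiv.Perm α, μ ∈ M ↔
      (∀ x, μ (μ x) = x) ∧ supp μ ⊆ T ∧ (supp μ).card = 2*t) :
    E.card ≤ ∑ μ ∈ M, (extend μ).card := by
  have hmem : ∀ π ∈ E, phi T t π ∈ M := by
    intro π hπ
    rw [hEm] at hπ
    obtain ⟨hinv, hfpf, hcard⟩ := hπ
    have spec := phi_spec T t hinv hfpf (exists_invariant hinv hfpf hcard)
    rw [hMm]
    exact ⟨spec.1, spec.2.1, spec.2.2.1⟩
  rw [Finset.card_eq_sum_card_fiberwise hmem]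
  apply Finset.sum_le_sum
  intro μ hμ
  apply Finset.card_le_card
  intro π hπ
  rw [Finset.mem_filter] at hπ
  obtain ⟨hπE, hφ⟩ := hπ
  rw [hEm] at hπE
  obtain ⟨hinv, hfpf, hcard⟩ := hπE
  have spec := phi_spec T t hinv hfpf (exists_invariant hinv hfpf hcard)
  rw [mem_extend]
  refine ⟨hinv, hfpf, fun x hx => ?_⟩
  rw [← hφ] at hx ⊢
  exact spec.2.2.2 x hx

lemma card_Match (T : Finset α) (t : ℕ) (M : Finset (Equiv.Perm α))
    (hMm : ∀ μ : Equiv.Perm α, μ ∈ M ↔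
      (∀ x, μ (μ x) = x) ∧ supp μ ⊆ T ∧ (supp μ).card = 2*t) :
    M.card = T.card.choose (2*t) * g t := by
  have hmem : ∀ μ ∈ M, supp μ ∈ T.powersetCard (2*t) := by
    intro μ hμ
    rw [hMm] at hμ
    rw [Finset.mem_powersetCard]
    exact ⟨hμ.2.1, hμ.2.2⟩
  rw [Finset.card_eq_sum_card_fiberwise hmem]
  have heq : ∀ s ∈ T.powersetCard (2*t), (M.filter fun μ => supp μ = s).card = g t := by
    intro s hs
    rw [Finset.mem_powersetCard] at hs
    have hset : M.filter (fun μ => supp μ = s) = FF s := by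
      ext μ
      rw [Finset.mem_filter, hMm, mem_FF]
      constructor
      · rintro ⟨⟨hinv, hsub, hcard⟩, hsupp⟩
        exact ⟨hinv, fun x => (mem_supp (μ := μ) (x := x)).symm.trans (by rw [hsupp])⟩
      · rintro ⟨hinv, hff⟩
        have hsupp : supp μ = s := by
          ext x; rw [mem_supp, hff x]
        exact ⟨⟨hinv, hsupp ▸ hs.1, hsupp ▸ hs.2⟩, hsupp⟩
    rw [hset, card_FF t s hs.2]
  rw [Finset.sum_congr rfl heq, Finset.sum_const, Finset.card_powersetCard, smul_eq_mul]

/-! Arithmetic lemmas -/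

lemma fac_eq (t : ℕ) : (2*t).factorial = 2^t * t.factorial * g t := by
  induction t with
  | zero => simp [g]
  | succ n ih =>
    rw [show 2*(n+1) = (2*n+1)+1 from by omega, Nat.factorial_succ,
      show (2*n+1) = (2*n)+1 from rfl, Nat.factorial_succ, ih,
      g_succ, Nat.factorial_succ]
    ring

lemma desc_pair (q t : ℕ) :
    q.descFactorial (2*t) = ∏ j ∈ Finset.range t, ((q - 2*j) * (q - (2*j+1))) := by
  induction t with
  | zero => simp
  | succ n ih =>
    rw [show 2*(n+1) = (2*n+1)+1 from by omega, Nat.descFactorial_succ,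
      show (2*n+1) = (2*n)+1 from rfl, Nat.descFactorial_succ, ih, Finset.prod_range_succ]
    ring

lemma sub_mul_le (q s Dv : ℕ) (hqD : q ≤ Dv) : (q - s) * Dv ≤ q * (Dv - s) := by
  rcases le_or_gt s q with h | h
  · have h2 : s ≤ Dv := le_trans h hqD
    zify [h, h2]
    nlinarith [mul_le_mul_of_nonneg_left (show (q:ℤ) ≤ Dv by exact_mod_cast hqD)
      (show (0:ℤ) ≤ s by positivity)]
  · simp [Nat.sub_eq_zero_of_le h.le]

lemma key_ineq (q D t : ℕ) (hqD : q ≤ D) :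
    q.descFactorial (2*t) * D^t ≤ q^(2*t) * ∏ j ∈ Finset.range t, (D - (2*j+1)) := by
  rw [desc_pair]
  calc (∏ j ∈ Finset.range t, ((q - 2*j) * (q - (2*j+1)))) * D^t
      = ∏ j ∈ Finset.range t, ((q - 2*j) * (q - (2*j+1)) * D) := by
        simp only [Finset.prod_mul_distrib, Finset.prod_const, Finset.card_range]
    _ ≤ ∏ j ∈ Finset.range t, (q^2 * (D - (2*j+1))) := by
        apply Finset.prod_le_prod'
        intro j _
        calc (q - 2*j) * (q - (2*j+1)) * D = (q - 2*j) * ((q - (2*j+1)) * D) := by ring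
          _ ≤ q * (q * (D - (2*j+1))) :=
              Nat.mul_le_mul (Nat.sub_le q (2*j)) (sub_mul_le q (2*j+1) D hqD)
          _ = q^2 * (D - (2*j+1)) := by ring
    _ = q^(2*t) * ∏ j ∈ Finset.range t, (D - (2*j+1)) := by
        rw [Finset.prod_mul_distrib, Finset.prod_const, Finset.card_range, ← pow_mul]

lemma stirling (t : ℕ) : (t:ℝ)^t ≤ Real.exp 1 ^ t * t.factorial := by
  rw [Real.exp_one_pow]
  have hfac : (0:ℝ) < (t.factorial : ℝ) := by exact_mod_cast t.factorial_pos
  have h1 : (t:ℝ)^t / t.factorial ≤ Real.exp t := by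
    refine le_trans ?_ (Real.sum_le_exp_of_nonneg (by positivity) (t+1))
    exact Finset.single_le_sum (f := fun i => (t:ℝ)^i / i.factorial)
      (fun i _ => by positivity) (Finset.self_mem_range_succ t)
  rw [div_le_iff₀ hfac] at h1
  exact h1

lemma arith (D m₂ q t : ℕ) (hD : D = 2*m₂) (hq : 2*q < D) (ht : 0 < t) (htq : 2*t ≤ q) :
    ((q.choose (2*t) * g t * g (m₂ - t) : ℕ) : ℝ) / ((g m₂ : ℕ) : ℝ) ≤
      ((Real.exp 1 * q) / (2*t) * ((q:ℝ)/D)) ^ t := by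
  have htm : t ≤ m₂ := by omega
  have hDpos : 0 < D := by omega
  set B : ℕ := ∏ j ∈ Finset.range t, (D - (2*j+1)) with hB
  have hBpos : 0 < B := Finset.prod_pos (fun j hj => by
    have := Finset.mem_range.mp hj; omega)
  have hm : m₂ = (m₂ - t) + t := by omega
  have hgm : g m₂ = g (m₂ - t) * B := by
    have h1 : g m₂ = g (m₂ - t) * ∏ j ∈ Finset.range t, (2*((m₂ - t) + j)+1) := by
      calc g m₂ = g ((m₂ - t) + t) := by rw [← hm]
        _ = g (m₂ - t) * ∏ j ∈ Finset.range t, (2*((m₂-t)+j)+1) := by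
            simp only [g]; rw [Finset.prod_range_add]
    have h2 : ∏ j ∈ Finset.range t, (2*((m₂-t)+j)+1) = B := by
      rw [hB, ← Finset.prod_range_reflect (fun j => D - (2*j+1)) t]
      apply Finset.prod_congr rfl
      intro j hj
      have := Finset.mem_range.mp hj
      omega
    rw [h1, h2]
  have hdesc : q.descFactorial (2*t) = 2^t * t.factorial * g t * q.choose (2*t) := by
    rw [Nat.descFactorial_eq_factorial_mul_choose, fac_eq]
  have hkey := key_ineq q D t (by omega)
  have hfacpos : (0:ℝ) < (t.factorial : ℝ) := by exact_mod_cast t.factorial_pos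
  have hBr : (0:ℝ) < (B:ℝ) := by exact_mod_cast hBpos
  have hDr : (0:ℝ) < (D:ℝ) := by exact_mod_cast hDpos
  have htr : (0:ℝ) < (t:ℝ) := by exact_mod_cast ht
  have hgmt : (0:ℝ) < (g (m₂ - t) : ℝ) := by exact_mod_cast g_pos (m₂ - t)
  have hL : ((q.choose (2*t) * g t * g (m₂ - t) : ℕ) : ℝ) / ((g m₂ : ℕ) : ℝ)
      = ((q.choose (2*t) : ℝ) * g t) / B := by
    rw [hgm]; push_cast; field_simp
  rw [hL]
  have hRHS : ((Real.exp 1 * q) / (2*t) * ((q:ℝ)/D)) ^ t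
      = (Real.exp 1 ^ t * (q:ℝ)^(2*t)) / ((2*(t:ℝ))^t * (D:ℝ)^t) := by
    rw [div_mul_div_comm, div_pow]
    congr 1
    · rw [show Real.exp 1 * (q:ℝ) * (q:ℝ) = Real.exp 1 * (q:ℝ)^2 from by ring,
        mul_pow, ← pow_mul]
    · rw [mul_pow]
  rw [hRHS, div_le_div_iff₀ hBr (by positivity)]
  have hdescr : ((q.descFactorial (2*t) : ℕ) : ℝ)
      = 2^t * t.factorial * g t * q.choose (2*t) := by exact_mod_cast hdesc
  have hkeyr : ((q.descFactorial (2*t):ℕ):ℝ) * (D:ℝ)^t ≤ (q:ℝ)^(2*t) * B := by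
    exact_mod_cast hkey
  have hst := stirling t
  calc ((q.choose (2*t) : ℝ) * g t) * ((2*(t:ℝ))^t * (D:ℝ)^t)
      = ((q.choose (2*t) : ℝ) * g t * 2^t * (D:ℝ)^t) * (t:ℝ)^t := by
        rw [mul_pow]; ring
    _ ≤ ((q.choose (2*t) : ℝ) * g t * 2^t * (D:ℝ)^t) * (Real.exp 1 ^ t * t.factorial) := by
        apply mul_le_mul_of_nonneg_left hst
        positivity
    _ = Real.exp 1 ^ t * (((q.descFactorial (2*t) : ℕ) : ℝ) * (D:ℝ)^t) := by
        rw [hdescr]; ring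
    _ ≤ Real.exp 1 ^ t * ((q:ℝ)^(2*t) * B) := by
        apply mul_le_mul_of_nonneg_left hkeyr
        positivity
    _ = Real.exp 1 ^ t * (q:ℝ)^(2*t) * B := by ring

end Stmt17

/-- Pairing model (`h = 2` case): take a uniformly random perfect matching (a fixed-point
free involution) of `D = 2 m₂` balls, and fix a set `T` of `q` balls (the balls lying in
the bin-set `S`).  If `q < D/2`, then the probability that at least `t` pairs have both
balls in `T` is at most `((e q)/(2t) · (q/D))^t`. -/
theorem stmt17 (D m₂ q t : ℕ) (hD : D = 2 * m₂)
    (T : Finset (Fin D)) (hT : T.card = q) (hq : 2 * q < D) :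
    (Nat.card {π : Equiv.Perm (Fin D) //
        (∀ i, π (π i) = i) ∧ (∀ i, π i ≠ i) ∧
        2 * t ≤ (Finset.univ.filter fun i : Fin D => i ∈ T ∧ π i ∈ T).card} : ℝ) /
      (Nat.card {π : Equiv.Perm (Fin D) //
        (∀ i, π (π i) = i) ∧ (∀ i, π i ≠ i)} : ℝ) ≤
    ((Real.exp 1 * q) / (2 * t) * ((q : ℝ) / D)) ^ t := by
  classical
  open Stmt17 in
  have hcard : ∀ (p : Equiv.Perm (Fin D) → Prop) (_ : DecidablePred p),
      Nat.card {π : Equiv.Perm (Fin D) // p π} = (Finset.univ.filter p).card := by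
    intro p hp
    rw [Nat.card_eq_fintype_card]
    convert Fintype.card_subtype p
  rw [hcard _ inferInstance, hcard _ inferInstance]
  set E := Finset.univ.filter (fun π : Equiv.Perm (Fin D) =>
    (∀ i, π (π i) = i) ∧ (∀ i, π i ≠ i) ∧
      2*t ≤ (Finset.univ.filter fun i : Fin D => i ∈ T ∧ π i ∈ T).card) with hE
  have hden : (Finset.univ.filter fun π : Equiv.Perm (Fin D) =>
      (∀ i, π (π i) = i) ∧ (∀ i, π i ≠ i)) = Stmt17.FF Finset.univ := by
    ext π
    simp [Stmt17.mem_FF]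
  have hcardD : (Finset.univ : Finset (Fin D)).card = 2 * m₂ := by
    rw [Finset.card_univ, Fintype.card_fin]; omega
  have hN : (Stmt17.FF (Finset.univ : Finset (Fin D))).card = Stmt17.g m₂ :=
    Stmt17.card_FF m₂ _ hcardD
  rw [hden, hN]
  have hNpos : (0:ℝ) < (Stmt17.g m₂ : ℝ) := by exact_mod_cast Stmt17.g_pos m₂
  rcases Nat.eq_zero_or_pos t with rfl | ht
  · simp only [pow_zero]
    rw [div_le_one hNpos]
    have hsub : E ⊆ Stmt17.FF Finset.univ := by
      intro π hπ
      rw [hE, Finset.mem_filter] at hπ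
      rw [Stmt17.mem_FF]
      exact ⟨hπ.2.1, fun x => iff_of_true (hπ.2.2.1 x) (Finset.mem_univ x)⟩
    calc (E.card : ℝ) ≤ ((Stmt17.FF (Finset.univ : Finset (Fin D))).card : ℝ) := by
          exact_mod_cast Finset.card_le_card hsub
      _ = (Stmt17.g m₂ : ℝ) := by rw [hN]
  rcases lt_or_ge q (2*t) with hq2 | htq
  · have hE0 : E = ∅ := by
      rw [hE, Finset.filter_eq_empty_iff]
      intro π _
      rintro ⟨h1, h2, h3⟩
      have hsub : (Finset.univ.filter fun i : Fin D => i ∈ T ∧ π i ∈ T) ⊆ T :=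
        fun i hi => (Finset.mem_filter.mp hi).2.1
      have := Finset.card_le_card hsub
      omega
    rw [hE0]
    simp only [Finset.card_empty, Nat.cast_zero, zero_div]
    positivity
  · -- main case
    have hEle : E.card ≤ q.choose (2*t) * Stmt17.g t * Stmt17.g (m₂ - t) := by
      set M := Finset.univ.filter (fun μ : Equiv.Perm (Fin D) =>
          (∀ x, μ (μ x) = x) ∧ Stmt17.supp μ ⊆ T ∧ (Stmt17.supp μ).card = 2*t) with hM
      have hMm : ∀ μ : Equiv.Perm (Fin D), μ ∈ M ↔
          (∀ x, μ (μ x) = x) ∧ Stmt17.supp μ ⊆ T ∧ (Stmt17.supp μ).card = 2*t := by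
        intro μ
        rw [hM, Finset.mem_filter]
        exact and_iff_right (Finset.mem_univ μ)
      have hEm : ∀ π : Equiv.Perm (Fin D), π ∈ E ↔ (∀ x, π (π x) = x) ∧ (∀ x, π x ≠ x) ∧
          2*t ≤ (Finset.univ.filter fun i => i ∈ T ∧ π i ∈ T).card := by
        intro π
        rw [hE, Finset.mem_filter]
        exact and_iff_right (Finset.mem_univ π)
      have h1 := Stmt17.Ecard_le T t E M hEm hMm
      have h2 : ∀ μ ∈ M, (Stmt17.extend μ).card = Stmt17.g (m₂ - t) := by
        intro μ hμ
        rw [hMm] at hμ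
        rw [Stmt17.card_extend hμ.1]
        apply Stmt17.card_FF
        rw [Finset.card_compl, hμ.2.2, Fintype.card_fin]
        omega
      calc E.card ≤ ∑ μ ∈ M, (Stmt17.extend μ).card := h1
        _ = ∑ _μ ∈ M, Stmt17.g (m₂ - t) := Finset.sum_congr rfl h2
        _ = M.card * Stmt17.g (m₂ - t) := by rw [Finset.sum_const, smul_eq_mul]
        _ = q.choose (2*t) * Stmt17.g t * Stmt17.g (m₂ - t) := by
            rw [Stmt17.card_Match T t M hMm, hT]
    calc (E.card : ℝ) / (Stmt17.g m₂ : ℝ)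
        ≤ ((q.choose (2*t) * Stmt17.g t * Stmt17.g (m₂ - t) : ℕ) : ℝ) / (Stmt17.g m₂ : ℝ) := by
          exact (div_le_div_iff_of_pos_right hNpos).mpr (by exact_mod_cast hEle)
      _ ≤ ((Real.exp 1 * q) / (2 * t) * ((q : ℝ) / D)) ^ t :=
          Stmt17.arith D m₂ q t hD hq ht htq
end

section
/- Let h ≥ 2 and let D balls be partitioned uniformly at random into parts, m_{h−j} parts of size h−j for j = 0,…,w−1, after being allocated into bins with exactly q balls in a fixed bin-set S. Assume q < D/h and that t → ∞ as n → ∞. Then the probability that Σ_{i=2}^h (i−1)·ρ(S,i) ≥ t is at most (e·h³·q²/(4tD))^t, where ρ(S,i) is the number of parts with exactly i balls in S. -/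
open scoped Classical
open Finset Equiv

section Aux

variable {d Np h : ℕ}

lemma cardFixId (A : Finset (Fin d)) :
    (Finset.univ.filter fun σ : Equiv.Perm (Fin d) => ∀ x ∈ A, σ x = x).card
      = Nat.factorial (d - A.card) := by
  rw [← Fintype.card_subtype]
  have e := (Equiv.Perm.subtypeEquivSubtypePerm (fun a : Fin d => a ∉ A))
  have e2 : { f : Equiv.Perm (Fin d) // ∀ a, ¬ a ∉ A → f a = a } ≃
      { f : Equiv.Perm (Fin d) // ∀ x ∈ A, f x = x } :=
    Equiv.subtypeEquivRight (by intro f; constructor <;> intro hf a ha <;> exact hf a (by simpa using ha))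
  rw [Fintype.card_congr ((e.trans e2).symm : _ ≃ Equiv.Perm {a : Fin d // a ∉ A}),
    Fintype.card_perm]
  congr 1
  rw [Fintype.card_subtype_compl, Fintype.card_fin, Fintype.card_coe]

lemma cardFix (A : Finset (Fin d)) (σ₀ : Equiv.Perm (Fin d)) :
    (Finset.univ.filter fun σ : Equiv.Perm (Fin d) => ∀ x ∈ A, σ x = σ₀ x).card
      = Nat.factorial (d - A.card) := by
  rw [← cardFixId A]
  apply Finset.card_bij' (fun σ _ => σ₀⁻¹ * σ) (fun τ _ => σ₀ * τ)
  · intro σ hσ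
    simp only [mem_filter, mem_univ, true_and] at hσ ⊢
    intro x hx
    simp [Equiv.Perm.mul_apply, hσ x hx]
  · intro τ hτ
    simp only [mem_filter, mem_univ, true_and] at hτ ⊢
    intro x hx
    simp [Equiv.Perm.mul_apply, hτ x hx]
  · intro σ _; simp [mul_assoc]
  · intro τ _; simp [mul_assoc]

lemma cardExtLe (A : Finset (Fin d)) (g : Fin d → Fin d) :
    (Finset.univ.filter fun σ : Equiv.Perm (Fin d) => ∀ x ∈ A, σ x = g x).card
      ≤ Nat.factorial (d - A.card) := by
  rcases Finset.eq_empty_or_nonempty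
      (Finset.univ.filter fun σ : Equiv.Perm (Fin d) => ∀ x ∈ A, σ x = g x) with he | ⟨σ₀, hσ₀⟩
  · rw [he]; simp
  · simp only [mem_filter, mem_univ, true_and] at hσ₀
    have : (Finset.univ.filter fun σ : Equiv.Perm (Fin d) => ∀ x ∈ A, σ x = g x)
        ⊆ (Finset.univ.filter fun σ : Equiv.Perm (Fin d) => ∀ x ∈ A, σ x = σ₀ x) := by
      intro σ hσ
      simp only [mem_filter, mem_univ, true_and] at hσ ⊢
      intro x hx; rw [hσ x hx, hσ₀ x hx]
    exact le_of_le_of_eq (Finset.card_le_card this) (cardFix A σ₀)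

/-- the restriction map -/
noncomputable def rmap (A : Finset (Fin d)) (σ : Equiv.Perm (Fin d)) : Fin d → Fin d :=
  fun x => if x ∈ A then σ x else x

lemma mainCount (pt : Fin d → Fin Np)
    (hfib : ∀ p, (Finset.univ.filter fun x => pt x = p).card ≤ h)
    (K : ℕ) (hK : K < d) :
    ∀ n (A R : Finset (Fin d)), A.card = n → R ⊆ A → A.card ≤ K →
    ((Finset.univ.filter fun σ : Equiv.Perm (Fin d) =>
        ∀ x ∈ R, ∃ y ∈ A, y < x ∧ pt (σ y) = pt (σ x)).card : ℝ)
      ≤ (((h-1) * K : ℕ) : ℝ) ^ R.card / (((d - K : ℕ) : ℝ)) ^ R.card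
          * Nat.factorial d := by
  have hdK : (0:ℝ) < ((d - K : ℕ) : ℝ) := by
    have : 0 < d - K := by omega
    exact_mod_cast this
  intro n
  induction n using Nat.strong_induction_on with
  | _ n ih =>
    intro A R hAn hRA hAK
    rcases Finset.eq_empty_or_nonempty A with hA | hA
    · subst hA
      have hR : R = ∅ := Finset.subset_empty.mp hRA
      subst hR
      simp only [Finset.notMem_empty, false_implies, implies_true, Finset.filter_true,
        Finset.card_univ, Fintype.card_perm, Fintype.card_fin, Finset.card_empty, pow_zero]
      rw [div_one, one_mul]
    · set m := A.max' hA with hm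
      have hmA : m ∈ A := A.max'_mem hA
      set A' := A.erase m with hA'
      have hcardA' : A'.card = A.card - 1 := Finset.card_erase_of_mem hmA
      have hApos : 1 ≤ A.card := Finset.card_pos.mpr hA
      by_cases hmR : m ∈ R
      · -- main case
        set R' := R.erase m with hR'
        have hR'A' : R' ⊆ A' := fun x hx => by
          rcases Finset.mem_erase.mp hx with ⟨hxm, hxR⟩
          exact Finset.mem_erase.mpr ⟨hxm, hRA hxR⟩
        set S := Finset.univ.filter fun σ : Equiv.Perm (Fin d) =>
          ∀ x ∈ R, ∃ y ∈ A, y < x ∧ pt (σ y) = pt (σ x) with hS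
        set S' := Finset.univ.filter fun σ : Equiv.Perm (Fin d) =>
          ∀ x ∈ R', ∃ y ∈ A', y < x ∧ pt (σ y) = pt (σ x) with hS'
        have hSS' : S ⊆ S' := by
          intro σ hσ
          simp only [hS, hS', Finset.mem_filter, Finset.mem_univ, true_and] at hσ ⊢
          intro x hx
          rcases Finset.mem_erase.mp hx with ⟨hxm, hxR⟩
          obtain ⟨y, hyA, hyx, hp⟩ := hσ x hxR
          have hxle : x ≤ m := A.le_max' x (hRA hxR)
          have hxm' : x < m := lt_of_le_of_ne hxle hxm
          exact ⟨y, Finset.mem_erase.mpr ⟨ne_of_lt (lt_trans hyx hxm'), hyA⟩, hyx, hp⟩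
        -- key nat inequality
        have key : S.card * (d - A.card + 1) ≤ S'.card * ((h-1) * A'.card) := by
          have hfibS : S.card = ∑ g ∈ S.image (rmap A'), (S.filter fun σ => rmap A' σ = g).card :=
            Finset.card_eq_sum_card_image _ _
          -- fiber bound on S
          have hfiber : ∀ g ∈ S.image (rmap A'),
              (S.filter fun σ => rmap A' σ = g).card
                ≤ (h-1) * A'.card * Nat.factorial (d - A.card) := by
            intro g hg
            obtain ⟨σ₀, hσ₀S, hσ₀g⟩ := Finset.mem_image.mp hg
            set V : Finset (Fin d) :=
              (A'.biUnion fun y => Finset.univ.filter fun v => pt v = pt (σ₀ y))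
                \ A'.image σ₀ with hV
            have hsub : (S.filter fun σ => rmap A' σ = g) ⊆
                V.biUnion fun v => Finset.univ.filter fun σ : Equiv.Perm (Fin d) =>
                  ∀ x ∈ A, σ x = (fun z => if z = m then v else σ₀ z) x := by
              intro σ hσ
              rcases Finset.mem_filter.mp hσ with ⟨hσS, hσg⟩
              have hagree : ∀ x ∈ A', σ x = σ₀ x := by
                intro x hx
                have h1 : rmap A' σ x = rmap A' σ₀ x := by rw [hσg, hσ₀g]
                simpa [rmap, if_pos hx] using h1
              have hσS' := Finset.mem_filter.mp hσS |>.2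
              obtain ⟨y, hyA, hym, hp⟩ := hσS' m hmR
              have hyA' : y ∈ A' := Finset.mem_erase.mpr ⟨ne_of_lt hym, hyA⟩
              have hσmV : σ m ∈ V := by
                rw [hV, Finset.mem_sdiff]
                constructor
                · exact Finset.mem_biUnion.mpr ⟨y, hyA', by
                    simp only [Finset.mem_filter, Finset.mem_univ, true_and]
                    rw [← hagree y hyA']; exact hp.symm⟩
                · intro hc
                  obtain ⟨y', hy'A', hy'⟩ := Finset.mem_image.mp hc
                  have : σ y' = σ m := by rw [hagree y' hy'A', hy']
                  have : y' = m := σ.injective this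
                  exact (Finset.mem_erase.mp hy'A').1 this
              refine Finset.mem_biUnion.mpr ⟨σ m, hσmV, ?_⟩
              simp only [Finset.mem_filter, Finset.mem_univ, true_and]
              intro x hxA
              by_cases hxm : x = m
              · subst hxm; simp
              · simp only [if_neg hxm]
                exact hagree x (Finset.mem_erase.mpr ⟨hxm, hxA⟩)
            have hVcard : V.card ≤ (h-1) * A'.card := by
              have himsub : A'.image σ₀ ⊆
                  A'.biUnion fun y => Finset.univ.filter fun v => pt v = pt (σ₀ y) := by
                intro v hv
                obtain ⟨y, hy, hyv⟩ := Finset.mem_image.mp hv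
                exact Finset.mem_biUnion.mpr ⟨y, hy, by simp [hyv]⟩
              rw [hV, Finset.card_sdiff_of_subset himsub,
                Finset.card_image_of_injective _ σ₀.injective]
              have hB : (A'.biUnion fun y =>
                  Finset.univ.filter fun v => pt v = pt (σ₀ y)).card ≤ h * A'.card := by
                calc (A'.biUnion fun y => Finset.univ.filter fun v => pt v = pt (σ₀ y)).card
                    ≤ ∑ y ∈ A', (Finset.univ.filter fun v => pt v = pt (σ₀ y)).card :=
                      Finset.card_biUnion_le
                  _ ≤ ∑ _y ∈ A', h := Finset.sum_le_sum fun y _ => hfib _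
                  _ = h * A'.card := by rw [Finset.sum_const, smul_eq_mul, mul_comm]
              calc (A'.biUnion fun y =>
                    Finset.univ.filter fun v => pt v = pt (σ₀ y)).card - A'.card
                  ≤ h * A'.card - A'.card := Nat.sub_le_sub_right hB _
                _ = (h-1) * A'.card := by rw [Nat.sub_one_mul]
            calc (S.filter fun σ => rmap A' σ = g).card
                ≤ (V.biUnion fun v => Finset.univ.filter fun σ : Equiv.Perm (Fin d) =>
                    ∀ x ∈ A, σ x = (fun z => if z = m then v else σ₀ z) x).card :=
                  Finset.card_le_card hsub
              _ ≤ ∑ v ∈ V, (Finset.univ.filter fun σ : Equiv.Perm (Fin d) =>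
                    ∀ x ∈ A, σ x = (fun z => if z = m then v else σ₀ z) x).card :=
                  Finset.card_biUnion_le
              _ ≤ ∑ _v ∈ V, Nat.factorial (d - A.card) :=
                  Finset.sum_le_sum fun v _ => cardExtLe A _
              _ = V.card * Nat.factorial (d - A.card) := by
                  rw [Finset.sum_const, smul_eq_mul]
              _ ≤ (h-1) * A'.card * Nat.factorial (d - A.card) :=
                  Nat.mul_le_mul_right _ hVcard
          -- fibers over S' are full
          have hfull : ∀ g ∈ S.image (rmap A'),
              (S'.filter fun σ => rmap A' σ = g).card = Nat.factorial (d - A'.card) := by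
            intro g hg
            obtain ⟨σ₀, hσ₀S, hσ₀g⟩ := Finset.mem_image.mp hg
            have hσ₀S' : σ₀ ∈ S' := hSS' hσ₀S
            have heq : (S'.filter fun σ => rmap A' σ = g)
                = Finset.univ.filter fun σ : Equiv.Perm (Fin d) => ∀ x ∈ A', σ x = σ₀ x := by
              ext σ
              simp only [Finset.mem_filter, Finset.mem_univ, true_and]
              constructor
              · rintro ⟨_, hσg⟩
                intro x hx
                have h1 : rmap A' σ x = rmap A' σ₀ x := by rw [hσg, hσ₀g]
                simpa [rmap, if_pos hx] using h1
              · intro hagree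
                constructor
                · rw [hS', Finset.mem_filter]
                  refine ⟨Finset.mem_univ _, ?_⟩
                  intro x hx
                  have hσ₀cond := Finset.mem_filter.mp hσ₀S' |>.2
                  obtain ⟨y, hyA', hyx, hp⟩ := hσ₀cond x hx
                  exact ⟨y, hyA', hyx, by
                    rw [hagree y hyA', hagree x (hR'A' hx)]; exact hp⟩
                · rw [← hσ₀g]
                  funext x
                  by_cases hx : x ∈ A'
                  · simp [rmap, if_pos hx, hagree x hx]
                  · simp [rmap, if_neg hx]
            rw [heq, cardFix]
          have himg : (S.image (rmap A')).card * Nat.factorial (d - A'.card) ≤ S'.card := by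
            calc (S.image (rmap A')).card * Nat.factorial (d - A'.card)
                = ∑ g ∈ S.image (rmap A'), (S'.filter fun σ => rmap A' σ = g).card := by
                  rw [Finset.sum_congr rfl hfull, Finset.sum_const, smul_eq_mul]
              _ ≤ ∑ g ∈ S'.image (rmap A'), (S'.filter fun σ => rmap A' σ = g).card :=
                  Finset.sum_le_sum_of_subset (Finset.image_subset_image hSS')
              _ = S'.card := (Finset.card_eq_sum_card_image _ _).symm
          have hScard : S.card ≤ (S.image (rmap A')).card
              * ((h-1) * A'.card * Nat.factorial (d - A.card)) := by
            rw [hfibS]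
            calc ∑ g ∈ S.image (rmap A'), (S.filter fun σ => rmap A' σ = g).card
                ≤ ∑ _g ∈ S.image (rmap A'), (h-1) * A'.card * Nat.factorial (d - A.card) :=
                  Finset.sum_le_sum hfiber
              _ = _ := by rw [Finset.sum_const, smul_eq_mul]
          have hfacsplit : Nat.factorial (d - A'.card)
              = (d - A.card + 1) * Nat.factorial (d - A.card) := by
            have h1 : d - A'.card = (d - A.card) + 1 := by omega
            rw [h1, Nat.factorial_succ]
          have h2 : S.card * Nat.factorial (d - A'.card)
              ≤ S'.card * ((h-1) * A'.card) * Nat.factorial (d - A.card) := by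
            calc S.card * Nat.factorial (d - A'.card)
                ≤ ((S.image (rmap A')).card * ((h-1) * A'.card * Nat.factorial (d - A.card)))
                    * Nat.factorial (d - A'.card) := Nat.mul_le_mul_right _ hScard
              _ = ((S.image (rmap A')).card * Nat.factorial (d - A'.card))
                    * ((h-1) * A'.card * Nat.factorial (d - A.card)) := by ring
              _ ≤ S'.card * ((h-1) * A'.card * Nat.factorial (d - A.card)) :=
                  Nat.mul_le_mul_right _ himg
              _ = S'.card * ((h-1) * A'.card) * Nat.factorial (d - A.card) := by ring
          rw [hfacsplit] at h2
          have h3 : S.card * (d - A.card + 1) * Nat.factorial (d - A.card)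
              ≤ S'.card * ((h-1) * A'.card) * Nat.factorial (d - A.card) := by
            calc S.card * (d - A.card + 1) * Nat.factorial (d - A.card)
                = S.card * ((d - A.card + 1) * Nat.factorial (d - A.card)) := by ring
              _ ≤ _ := h2
          exact Nat.le_of_mul_le_mul_right h3 (Nat.factorial_pos _)
        -- pass to ℝ
        have hih := ih (n-1) (by omega) A' R' (by omega) hR'A'
          (le_trans (by omega) hAK)
        have hcardR : R.card = R'.card + 1 := by
          rw [hR', Finset.card_erase_of_mem hmR]
          have : 1 ≤ R.card := Finset.card_pos.mpr ⟨m, hmR⟩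
          omega
        set c : ℝ := (((h-1) * K : ℕ) : ℝ) / (((d - K : ℕ) : ℝ)) with hc
        have hc0 : 0 ≤ c := div_nonneg (Nat.cast_nonneg _) (Nat.cast_nonneg _)
        have hstep : (S.card : ℝ) ≤ c * S'.card := by
          have hpos : (0:ℝ) < ((d - A.card + 1 : ℕ) : ℝ) := by positivity
          have hkeyR : (S.card : ℝ) * ((d - A.card + 1 : ℕ) : ℝ)
              ≤ (S'.card : ℝ) * (((h-1) * A'.card : ℕ) : ℝ) := by exact_mod_cast key
          have hfrac : (((h-1) * A'.card : ℕ) : ℝ) / ((d - A.card + 1 : ℕ) : ℝ) ≤ c := by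
            rw [hc, div_le_div_iff₀ hpos hdK]
            have hnat : ((h-1) * A'.card) * (d - K) ≤ ((h-1) * K) * (d - A.card + 1) := by
              apply Nat.mul_le_mul
              · exact Nat.mul_le_mul_left _ (by omega)
              · omega
            exact_mod_cast hnat
          calc (S.card : ℝ) = (S.card : ℝ) * ((d - A.card + 1 : ℕ) : ℝ)
                / ((d - A.card + 1 : ℕ) : ℝ) := by field_simp
            _ ≤ (S'.card : ℝ) * (((h-1) * A'.card : ℕ) : ℝ) / ((d - A.card + 1 : ℕ) : ℝ) :=
                div_le_div_of_nonneg_right hkeyR hpos.le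
            _ = (S'.card : ℝ) * ((((h-1) * A'.card : ℕ) : ℝ) / ((d - A.card + 1 : ℕ) : ℝ)) := by
                ring
            _ ≤ (S'.card : ℝ) * c := by
                exact mul_le_mul_of_nonneg_left hfrac (Nat.cast_nonneg _)
            _ = c * S'.card := mul_comm _ _
        calc (S.card : ℝ) ≤ c * S'.card := hstep
          _ ≤ c * ((((h-1) * K : ℕ) : ℝ) ^ R'.card / (((d - K : ℕ) : ℝ)) ^ R'.card
              * Nat.factorial d) := mul_le_mul_of_nonneg_left hih hc0
          _ = (((h-1) * K : ℕ) : ℝ) ^ R.card / (((d - K : ℕ) : ℝ)) ^ R.card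
              * Nat.factorial d := by
            rw [hcardR, hc]
            field_simp
            ring
      · -- m ∉ R : condition unchanged
        have heq : (Finset.univ.filter fun σ : Equiv.Perm (Fin d) =>
            ∀ x ∈ R, ∃ y ∈ A, y < x ∧ pt (σ y) = pt (σ x))
            = Finset.univ.filter fun σ : Equiv.Perm (Fin d) =>
            ∀ x ∈ R, ∃ y ∈ A', y < x ∧ pt (σ y) = pt (σ x) := by
          ext σ
          simp only [Finset.mem_filter, Finset.mem_univ, true_and]
          constructor
          · intro hcond x hx
            obtain ⟨y, hyA, hyx, hp⟩ := hcond x hx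
            have hxle : x ≤ m := A.le_max' x (hRA hx)
            have hym : y < m := lt_of_lt_of_le hyx hxle
            exact ⟨y, Finset.mem_erase.mpr ⟨ne_of_lt hym, hyA⟩, hyx, hp⟩
          · intro hcond x hx
            obtain ⟨y, hyA', hyx, hp⟩ := hcond x hx
            exact ⟨y, Finset.erase_subset _ _ hyA', hyx, hp⟩
        rw [heq]
        exact ih (n-1) (by omega) A' R (by omega)
          (fun x hx => Finset.mem_erase.mpr ⟨fun hxm => hmR (hxm ▸ hx), hRA hx⟩)
          (le_trans (by omega) hAK)

lemma XeqW (pt : Fin d → Fin Np)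
    (hfib : ∀ p, (Finset.univ.filter fun x => pt x = p).card ≤ h)
    (T : Finset (Fin d)) (σ : Equiv.Perm (Fin d)) :
    ∑ i ∈ Finset.Icc 2 h, (i - 1) *
        (Finset.univ.filter (fun p : Fin Np =>
          (T.filter fun x => pt (σ x) = p).card = i)).card
      = (T.filter fun x => ∃ y ∈ T, y < x ∧ pt (σ y) = pt (σ x)).card := by
  set W := T.filter fun x => ∃ y ∈ T, y < x ∧ pt (σ y) = pt (σ x) with hW
  have hcardW : W.card = ∑ p : Fin Np, (W.filter fun x => pt (σ x) = p).card :=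
    Finset.card_eq_sum_card_fiberwise (fun x _ => Finset.mem_univ _)
  have hperp : ∀ p : Fin Np, (W.filter fun x => pt (σ x) = p).card
      = (T.filter fun x => pt (σ x) = p).card - 1 := by
    intro p
    set Tp := T.filter fun x => pt (σ x) = p with hTp
    rcases Finset.eq_empty_or_nonempty Tp with hne | hne
    · have : (W.filter fun x => pt (σ x) = p) ⊆ Tp := by
        intro x hx
        simp only [hW, hTp, Finset.mem_filter] at hx ⊢
        exact ⟨hx.1.1, hx.2⟩
      have h0 : (W.filter fun x => pt (σ x) = p) = ∅ := by
        rw [hne] at this; exact Finset.subset_empty.mp this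
      rw [h0, hne]
      simp
    · set m0 := Tp.min' hne with hm0
      have hm0Tp : m0 ∈ Tp := Tp.min'_mem hne
      have heq : (W.filter fun x => pt (σ x) = p) = Tp.erase m0 := by
        ext x
        simp only [hW, hTp, Finset.mem_filter, Finset.mem_erase]
        constructor
        · rintro ⟨⟨hxT, y, hyT, hyx, hp⟩, hxp⟩
          have hyTp : y ∈ Tp := Finset.mem_filter.mpr ⟨hyT, by rw [hp, hxp]⟩
          exact ⟨fun hxm => absurd hyx (by
            rw [hxm, hm0]; exact not_lt.mpr (Tp.min'_le y hyTp)), hxT, hxp⟩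
        · rintro ⟨hxm, hxT, hxp⟩
          have hm0T : m0 ∈ T := (Finset.mem_filter.mp hm0Tp).1
          have hm0p : pt (σ m0) = p := (Finset.mem_filter.mp hm0Tp).2
          have hle : m0 ≤ x := Tp.min'_le x (Finset.mem_filter.mpr ⟨hxT, hxp⟩)
          exact ⟨⟨hxT, m0, hm0T, lt_of_le_of_ne hle (Ne.symm hxm), by rw [hm0p, hxp]⟩, hxp⟩
      rw [heq, Finset.card_erase_of_mem hm0Tp]
  have hTple : ∀ p : Fin Np, (T.filter fun x => pt (σ x) = p).card ≤ h := by
    intro p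
    have h1 : ((T.filter fun x => pt (σ x) = p).image σ) ⊆
        Finset.univ.filter fun v => pt v = p := by
      intro v hv
      obtain ⟨x, hx, hxv⟩ := Finset.mem_image.mp hv
      simp only [Finset.mem_filter, Finset.mem_univ, true_and]
      rw [← hxv]; exact (Finset.mem_filter.mp hx).2
    calc (T.filter fun x => pt (σ x) = p).card
        = ((T.filter fun x => pt (σ x) = p).image σ).card :=
          (Finset.card_image_of_injective _ σ.injective).symm
      _ ≤ _ := Finset.card_le_card h1
      _ ≤ h := hfib p
  have hfibsum : ∑ p : Fin Np, ((T.filter fun x => pt (σ x) = p).card - 1)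
      = ∑ i ∈ Finset.range (h+1), ∑ p ∈ Finset.univ.filter
          (fun p : Fin Np => (T.filter fun x => pt (σ x) = p).card = i),
          ((T.filter fun x => pt (σ x) = p).card - 1) :=
    (Finset.sum_fiberwise_of_maps_to (fun p _ =>
      Finset.mem_range.mpr (Nat.lt_succ_of_le (hTple p))) _).symm
  have hinner : ∀ i ∈ Finset.range (h+1),
      ∑ p ∈ Finset.univ.filter
          (fun p : Fin Np => (T.filter fun x => pt (σ x) = p).card = i),
          ((T.filter fun x => pt (σ x) = p).card - 1)
        = (i - 1) * (Finset.univ.filter (fun p : Fin Np =>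
            (T.filter fun x => pt (σ x) = p).card = i)).card := by
    intro i _
    rw [Finset.sum_congr rfl (fun p hp => by
      rw [(Finset.mem_filter.mp hp).2]), Finset.sum_const, smul_eq_mul, mul_comm]
  have hrange : ∑ i ∈ Finset.range (h+1), (i - 1) *
        (Finset.univ.filter (fun p : Fin Np =>
          (T.filter fun x => pt (σ x) = p).card = i)).card
      = ∑ i ∈ Finset.Icc 2 h, (i - 1) *
        (Finset.univ.filter (fun p : Fin Np =>
          (T.filter fun x => pt (σ x) = p).card = i)).card := by
    symm
    apply Finset.sum_subset
    · intro i hi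
      rcases Finset.mem_Icc.mp hi with ⟨h2, hh⟩
      exact Finset.mem_range.mpr (by omega)
    · intro i hi hni
      have : i ≤ 1 := by
        rcases Finset.mem_range.mp hi with h1
        by_contra hc
        exact hni (Finset.mem_Icc.mpr ⟨by omega, by omega⟩)
      have : i - 1 = 0 := by omega
      rw [this, zero_mul]
  rw [← hrange, ← Finset.sum_congr rfl hinner, ← hfibsum, hcardW]
  exact Finset.sum_congr rfl (fun p _ => (hperp p).symm)

lemma pow_self_le_exp_mul_factorial :
    ∀ t : ℕ, (t : ℝ) ^ t ≤ Real.exp t * Nat.factorial t := by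
  intro t
  induction t with
  | zero => simp
  | succ t iht =>
    have hstep : ((t + 1 : ℕ) : ℝ) ^ t ≤ Real.exp 1 * (t : ℝ) ^ t := by
      rcases Nat.eq_zero_or_pos t with ht0 | htpos
      · subst ht0; simp [Real.one_le_exp_iff]
      · have htR : (0:ℝ) < t := by exact_mod_cast htpos
        have h1 : ((t:ℝ) + 1) ≤ (t:ℝ) * Real.exp (1 / t) := by
          have := Real.add_one_le_exp (1 / (t:ℝ))
          calc ((t:ℝ) + 1) = (t:ℝ) * (1 / t + 1) := by field_simp; ring
            _ ≤ (t:ℝ) * Real.exp (1/t) := by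
                exact mul_le_mul_of_nonneg_left this htR.le
        calc ((t + 1 : ℕ) : ℝ) ^ t = ((t:ℝ) + 1) ^ t := by push_cast; ring_nf
          _ ≤ ((t:ℝ) * Real.exp (1/t)) ^ t := by
              apply pow_le_pow_left₀ (by positivity) h1
          _ = (t:ℝ)^t * Real.exp (1/t) ^ t := by rw [mul_pow]
          _ = (t:ℝ)^t * Real.exp 1 := by
              rw [← Real.exp_nat_mul]
              congr 1
              field_simp
          _ = Real.exp 1 * (t:ℝ)^t := by ring
    calc ((t + 1 : ℕ) : ℝ) ^ (t + 1) = ((t+1:ℕ):ℝ) * ((t+1:ℕ):ℝ) ^ t := by ring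
      _ ≤ ((t+1:ℕ):ℝ) * (Real.exp 1 * (t:ℝ)^t) := by
          exact mul_le_mul_of_nonneg_left hstep (by positivity)
      _ ≤ ((t+1:ℕ):ℝ) * (Real.exp 1 * (Real.exp t * Nat.factorial t)) := by
          apply mul_le_mul_of_nonneg_left _ (by positivity)
          exact mul_le_mul_of_nonneg_left iht (Real.exp_pos 1).le
      _ = Real.exp (t+1) * (((t+1:ℕ):ℝ) * Nat.factorial t) := by
          rw [Real.exp_add]; push_cast; ring
      _ = Real.exp ((t+1 : ℕ)) * Nat.factorial (t+1) := by
          rw [Nat.factorial_succ]; push_cast; ring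

end Aux

/-- General partition-allocation claim (`c:p(q)`).  `D n` balls are partitioned uniformly
at random into parts of sizes between `h−w+1` and `h` (the random partition is obtained
by pulling back a fixed partition `pt n` along a uniform permutation `σ`); a set `T n` of
exactly `q n` balls lies in the bin-set `S`.  Let `ρ(S,i)` be the number of parts with
exactly `i` balls in `T n`.  If `q n < D n / h` and `t n → ∞`, then eventually the
probability that `∑_{i=2}^h (i−1) ρ(S,i) ≥ t n` is at most `(e h³ q²/(4 t D))^t`. -/
theorem stmt19 (h w : ℕ) (hw : 0 < w) (hwh : w < h)
    (D q t N : ℕ → ℕ) (pt : (n : ℕ) → Fin (D n) → Fin (N n))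
    (hpart : ∀ n : ℕ, ∀ p : Fin (N n),
      h - w + 1 ≤ Nat.card {x : Fin (D n) // pt n x = p} ∧
        Nat.card {x : Fin (D n) // pt n x = p} ≤ h)
    (T : (n : ℕ) → Finset (Fin (D n))) (hT : ∀ n, (T n).card = q n)
    (hq : ∀ n, h * q n < D n)
    (ht : Filter.Tendsto t Filter.atTop Filter.atTop) :
    ∀ᶠ n : ℕ in Filter.atTop,
      (Nat.card {σ : Equiv.Perm (Fin (D n)) //
          t n ≤ ∑ i ∈ Finset.Icc 2 h, (i - 1) *
            (Finset.univ.filter (fun p : Fin (N n) =>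
              ((T n).filter fun x => pt n (σ x) = p).card = i)).card} : ℝ) /
        (Nat.card (Equiv.Perm (Fin (D n))) : ℝ) ≤
      (Real.exp 1 * (h : ℝ) ^ 3 * (q n : ℝ) ^ 2 / (4 * (t n : ℝ) * (D n : ℝ))) ^ (t n) := by
  have hh2 : 2 ≤ h := by omega
  filter_upwards [ht.eventually_ge_atTop 1] with n htn
  set d := D n with hd
  set qn := q n with hqn
  set tn := t n with htnn
  have hfib : ∀ p : Fin (N n), (Finset.univ.filter fun x => pt n x = p).card ≤ h := by
    intro p
    have := (hpart n p).2
    rwa [Nat.card_eq_fintype_card, Fintype.card_subtype] at this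
  have hqd : qn < d := by
    have := hq n
    calc qn ≤ h * qn := Nat.le_mul_of_pos_left _ (by omega)
      _ < d := this
  have hd1 : 1 ≤ d := by omega
  -- numerator
  have hnum : (Nat.card {σ : Equiv.Perm (Fin d) //
      tn ≤ ∑ i ∈ Finset.Icc 2 h, (i - 1) *
        (Finset.univ.filter (fun p : Fin (N n) =>
          ((T n).filter fun x => pt n (σ x) = p).card = i)).card} : ℕ)
      = (Finset.univ.filter fun σ : Equiv.Perm (Fin d) =>
          tn ≤ ∑ i ∈ Finset.Icc 2 h, (i - 1) *
            (Finset.univ.filter (fun p : Fin (N n) =>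
              ((T n).filter fun x => pt n (σ x) = p).card = i)).card).card := by
    rw [Nat.card_eq_fintype_card, Fintype.card_subtype]
  have hden : (Nat.card (Equiv.Perm (Fin d)) : ℕ) = Nat.factorial d := by
    rw [Nat.card_eq_fintype_card, Fintype.card_perm, Fintype.card_fin]
  set Bad := Finset.univ.filter fun σ : Equiv.Perm (Fin d) =>
      tn ≤ ∑ i ∈ Finset.Icc 2 h, (i - 1) *
        (Finset.univ.filter (fun p : Fin (N n) =>
          ((T n).filter fun x => pt n (σ x) = p).card = i)).card with hBad
  -- union bound
  have hBadsub : Bad ⊆ ((T n).powersetCard tn).biUnion (fun R =>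
      Finset.univ.filter fun σ : Equiv.Perm (Fin d) =>
        ∀ x ∈ R, ∃ y ∈ T n, y < x ∧ pt n (σ y) = pt n (σ x)) := by
    intro σ hσ
    have hXle : tn ≤ ((T n).filter fun x =>
        ∃ y ∈ T n, y < x ∧ pt n (σ y) = pt n (σ x)).card := by
      have := (Finset.mem_filter.mp hσ).2
      rwa [XeqW (pt n) hfib (T n) σ] at this
    obtain ⟨R, hRW, hRcard⟩ := Finset.exists_subset_card_eq hXle
    refine Finset.mem_biUnion.mpr ⟨R, Finset.mem_powersetCard.mpr
      ⟨hRW.trans (Finset.filter_subset _ _), hRcard⟩, ?_⟩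
    simp only [Finset.mem_filter, Finset.mem_univ, true_and]
    intro x hx
    exact (Finset.mem_filter.mp (hRW hx)).2
  have hcount : ∀ R ∈ (T n).powersetCard tn,
      ((Finset.univ.filter fun σ : Equiv.Perm (Fin d) =>
        ∀ x ∈ R, ∃ y ∈ T n, y < x ∧ pt n (σ y) = pt n (σ x)).card : ℝ)
      ≤ (((h-1) * qn : ℕ) : ℝ) ^ tn / (((d - qn : ℕ) : ℝ)) ^ tn * Nat.factorial d := by
    intro R hR
    rcases Finset.mem_powersetCard.mp hR with ⟨hRT, hRcard⟩
    have := mainCount (h := h) (pt n) hfib qn hqd (T n).card (T n) R rfl hRT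
      (le_of_eq (hT n))
    rwa [hRcard] at this
  have hBadcard : (Bad.card : ℝ) ≤ (qn.choose tn : ℝ) *
      ((((h-1) * qn : ℕ) : ℝ) ^ tn / (((d - qn : ℕ) : ℝ)) ^ tn * Nat.factorial d) := by
    have h1 : (Bad.card : ℝ) ≤ ∑ R ∈ (T n).powersetCard tn,
        ((Finset.univ.filter fun σ : Equiv.Perm (Fin d) =>
          ∀ x ∈ R, ∃ y ∈ T n, y < x ∧ pt n (σ y) = pt n (σ x)).card : ℝ) := by
      have := le_trans (Finset.card_le_card hBadsub) Finset.card_biUnion_le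
      exact_mod_cast this
    calc (Bad.card : ℝ) ≤ _ := h1
      _ ≤ ∑ _R ∈ (T n).powersetCard tn,
          ((((h-1) * qn : ℕ) : ℝ) ^ tn / (((d - qn : ℕ) : ℝ)) ^ tn * Nat.factorial d) :=
        Finset.sum_le_sum hcount
      _ = (((T n).powersetCard tn).card : ℝ) *
          ((((h-1) * qn : ℕ) : ℝ) ^ tn / (((d - qn : ℕ) : ℝ)) ^ tn * Nat.factorial d) := by
        rw [Finset.sum_const, nsmul_eq_mul]
      _ = (qn.choose tn : ℝ) *
          ((((h-1) * qn : ℕ) : ℝ) ^ tn / (((d - qn : ℕ) : ℝ)) ^ tn * Nat.factorial d) := by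
        rw [Finset.card_powersetCard, hT n]
  -- final analytic chain
  rw [hnum, hden]
  have hfacpos : (0:ℝ) < Nat.factorial d := by exact_mod_cast Nat.factorial_pos d
  rw [div_le_iff₀ hfacpos]
  have htR : (1:ℝ) ≤ (tn : ℝ) := by exact_mod_cast htn
  have htpos : (0:ℝ) < tn := lt_of_lt_of_le one_pos htR
  have hdR : (0:ℝ) < d := by exact_mod_cast hd1
  have hBpos : (0:ℝ) < ((d - qn : ℕ) : ℝ) := by
    have : 0 < d - qn := by omega
    exact_mod_cast this
  have hbase : (qn : ℝ) * (((h-1) * qn : ℕ) : ℝ) * Real.exp 1 / ((tn : ℝ) * ((d - qn : ℕ) : ℝ))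
      ≤ Real.exp 1 * (h : ℝ) ^ 3 * (qn : ℝ) ^ 2 / (4 * (tn : ℝ) * (d : ℝ)) := by
    rw [div_le_div_iff₀ (by positivity) (by positivity)]
    have hA : (((h-1) * qn : ℕ) : ℝ) = ((h:ℝ) - 1) * qn := by
      push_cast [Nat.cast_sub (by omega : 1 ≤ h)]
      ring
    have hB : ((d - qn : ℕ) : ℝ) = (d : ℝ) - qn := by
      push_cast [Nat.cast_sub hqd.le]
      ring
    rw [hA, hB]
    have hhR : (2:ℝ) ≤ h := by exact_mod_cast hh2
    have hqR : (0:ℝ) ≤ qn := Nat.cast_nonneg _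
    have hhq : (h:ℝ) * qn + 1 ≤ d := by
      have := hq n
      have : h * qn + 1 ≤ d := this
      exact_mod_cast this
    have hkey : 4 * (d:ℝ) * ((h:ℝ) - 1) ≤ (h:ℝ)^3 * ((d:ℝ) - qn) := by
      nlinarith [mul_le_mul_of_nonneg_left (by linarith : (h:ℝ) * qn ≤ (d:ℝ) - 1)
        (by positivity : (0:ℝ) ≤ (h:ℝ)^2),
        mul_nonneg (mul_nonneg (by linarith : (0:ℝ) ≤ (h:ℝ) - 1)
          (by linarith : (0:ℝ) ≤ (h:ℝ) - 2)) (by linarith : (0:ℝ) ≤ (h:ℝ) + 2),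
        mul_nonneg (mul_nonneg (mul_nonneg (by linarith : (0:ℝ) ≤ (h:ℝ) - 1)
          (by linarith : (0:ℝ) ≤ (h:ℝ) - 2)) (by linarith : (0:ℝ) ≤ (h:ℝ) + 2)) hdR.le]
    have hfactor : (0:ℝ) ≤ Real.exp 1 * (qn:ℝ)^2 * (tn:ℝ) := by positivity
    nlinarith [mul_le_mul_of_nonneg_left hkey hfactor]
  calc (Bad.card : ℝ)
      ≤ (qn.choose tn : ℝ) *
        ((((h-1) * qn : ℕ) : ℝ) ^ tn / (((d - qn : ℕ) : ℝ)) ^ tn * Nat.factorial d) :=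
      hBadcard
    _ ≤ ((qn:ℝ) ^ tn / Nat.factorial tn) *
        ((((h-1) * qn : ℕ) : ℝ) ^ tn / (((d - qn : ℕ) : ℝ)) ^ tn * Nat.factorial d) := by
      apply mul_le_mul_of_nonneg_right (Nat.choose_le_pow_div tn qn)
      positivity
    _ ≤ ((qn:ℝ) ^ tn * (Real.exp 1 ^ tn / (tn:ℝ) ^ tn)) *
        ((((h-1) * qn : ℕ) : ℝ) ^ tn / (((d - qn : ℕ) : ℝ)) ^ tn * Nat.factorial d) := by
      apply mul_le_mul_of_nonneg_right _ (by positivity)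
      apply mul_le_mul_of_nonneg_left _ (by positivity)
      rw [inv_eq_one_div, div_le_div_iff₀ (by exact_mod_cast Nat.factorial_pos tn) (by positivity)]
      calc (1:ℝ) * (tn:ℝ)^tn = (tn:ℝ)^tn := one_mul _
        _ ≤ Real.exp tn * Nat.factorial tn := pow_self_le_exp_mul_factorial tn
        _ = Real.exp 1 ^ tn * Nat.factorial tn := by
            rw [← Real.exp_nat_mul]; norm_num
    _ = ((qn : ℝ) * (((h-1) * qn : ℕ) : ℝ) * Real.exp 1
          / ((tn : ℝ) * ((d - qn : ℕ) : ℝ))) ^ tn * Nat.factorial d := by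
      rw [div_pow, mul_pow, mul_pow, mul_pow]
      field_simp
    _ ≤ (Real.exp 1 * (h : ℝ) ^ 3 * (qn : ℝ) ^ 2 / (4 * (tn : ℝ) * (d : ℝ))) ^ tn
          * Nat.factorial d := by
      apply mul_le_mul_of_nonneg_right _ hfacpos.le
      exact pow_le_pow_left₀ (by positivity) hbase tn
end
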